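/- arXiv:1303.5869 — 3 statements merged into one kernel-verified Lean document; each statement's English description precedes it below -/
import Mathlib

section
/- For every z ∈ ℝ: (i) for every j ≥ 1, (1/j!)·(M^{(j)}(z) − u^{(j)}(z)·w(z)) = (1/(j−1)!)·M^{(j−1)}(z)·G(z); (ii) for every j ≥ q, (1/j!)·M^{(j)}(z) = (1/(j−1)!)·M^{(j−1)}(z)·G(z); (iii) for all m, p ≥ 0, M^{(q−1+p+m)}(z)/(q−1+p+m)! = (M^{(q−1+m)}(z)/(q−1+m)!)·G(z)^p = (M^{(q−1)}(z)/(q−1)!)·G(z)^{p+m}. -/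
open Matrix Kronecker

noncomputable section

/-- The `k × k` shift matrix with `(i,j)` entry `δ_{i+1,j}`. -/
def Sh (k : ℕ) : Matrix (Fin k) (Fin k) ℝ :=
  Matrix.of fun i j => if (i : ℕ) + 1 = (j : ℕ) then 1 else 0

/-- The matrix `A^k(z) ∈ ℝ^{q×r}`, with entries
`k!/(i!·j!·(k−i−j)!)·z^{k−i−j} = C(k,i)·C(k−i,j)·z^{k−i−j}` for `i+j ≤ k`, else `0`. -/
def Amat (q r k : ℕ) (z : ℝ) : Matrix (Fin q) (Fin r) ℝ :=
  Matrix.of fun i j =>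
    if (i : ℕ) + (j : ℕ) ≤ k then
      (Nat.choose k i : ℝ) * (Nat.choose (k - i) j : ℝ) * z ^ (k - i - j)
    else 0

/-- The block matrix `𝒜(z) ∈ ℝ^{μq×νr}` with `(i,j)` block `A^{i+j}(z)`. -/
def Acal (q r μ ν : ℕ) (z : ℝ) : Matrix (Fin μ × Fin q) (Fin ν × Fin r) ℝ :=
  Matrix.of fun p p' => Amat q r ((p.1 : ℕ) + (p'.1 : ℕ)) z p.2 p'.2

/-- `A^0 = e₀ f₀ᵀ ∈ ℝ^{q×r}`. -/
def A0 (q r : ℕ) : Matrix (Fin q) (Fin r) ℝ :=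
  Matrix.of fun a b => if (a : ℕ) = 0 ∧ (b : ℕ) = 0 then 1 else 0

/-- The block matrix `Ā ∈ ℝ^{μq×νr}` with `(i,j)` block `(S_qᵀ)^j · A^0 · S_r^i`. -/
def Abar (q r μ ν : ℕ) : Matrix (Fin μ × Fin q) (Fin ν × Fin r) ℝ :=
  Matrix.of fun p p' =>
    (((Sh q)ᵀ) ^ (p'.1 : ℕ) * A0 q r * (Sh r) ^ (p.1 : ℕ)) p.2 p'.2

/-- `J_k(z) = z·I_k + S_kᵀ`. -/
def Jmat (k : ℕ) (z : ℝ) : Matrix (Fin k) (Fin k) ℝ := z • 1 + (Sh k)ᵀ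

/-- The block lower-triangular matrix `𝓛_{m,k}(z)` with `(i,j)` block `C(i,j)·J_k(z)^{i−j}`
for `i ≥ j` and `0` otherwise. -/
def Lmat (m k : ℕ) (z : ℝ) : Matrix (Fin m × Fin k) (Fin m × Fin k) ℝ :=
  Matrix.of fun p p' =>
    if (p'.1 : ℕ) ≤ (p.1 : ℕ) then
      (Nat.choose p.1 p'.1 : ℝ) * ((Jmat k z) ^ ((p.1 : ℕ) - (p'.1 : ℕ))) p.2 p'.2
    else 0

/-- Natural (block row-major) identification of `Fin (m*n)` with `Fin m × Fin n`. -/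
def bIdx (m n : ℕ) : Fin (m * n) → Fin m × Fin n := fun x => finProdFinEquiv.symm x

/-- `M^{(n)}(z) ∈ ℝ^{q×r}`, the `n`-th derivative of `M(z) = u(z)w(z)`,
whose `(a,b)` entry is the `n`-th derivative of `z^{a+b}`. -/
def Md (q r n : ℕ) (z : ℝ) : Matrix (Fin q) (Fin r) ℝ :=
  Matrix.of fun a b => iteratedDeriv n (fun t : ℝ => t ^ ((a : ℕ) + (b : ℕ))) z

/-- The block matrix `𝓜(z) ∈ ℝ^{μq×νr}` with `(i,j)` block `M^{(i+j)}(z)`. -/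
def Mcal (q r μ ν : ℕ) (z : ℝ) : Matrix (Fin μ × Fin q) (Fin ν × Fin r) ℝ :=
  Matrix.of fun p p' => Md q r ((p.1 : ℕ) + (p'.1 : ℕ)) z p.2 p'.2

/-- The block matrix `𝓝(z) ∈ ℝ^{μq×νr}` with `(i,j)` block `M^{(i+j)}(z)/(i!·j!)`. -/
def Ncal (q r μ ν : ℕ) (z : ℝ) : Matrix (Fin μ × Fin q) (Fin ν × Fin r) ℝ :=
  Matrix.of fun p p' =>
    Md q r ((p.1 : ℕ) + (p'.1 : ℕ)) z p.2 p'.2 /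
      ((Nat.factorial (p.1 : ℕ) : ℝ) * (Nat.factorial (p'.1 : ℕ) : ℝ))

/-- `𝓝^0(z) = (M(z)/0!, …, M^{(ν−1)}(z)/(ν−1)!) ∈ ℝ^{q×νr}`. -/
def Ncal0 (q r ν : ℕ) (z : ℝ) : Matrix (Fin q) (Fin ν × Fin r) ℝ :=
  Matrix.of fun a p => Md q r (p.1 : ℕ) z a p.2 / (Nat.factorial (p.1 : ℕ) : ℝ)

/-- `𝓜^0(z) = (M(z), M'(z), …, M^{(ν−1)}(z)) ∈ ℝ^{q×νr}`. -/
def M0cal (q r ν : ℕ) (z : ℝ) : Matrix (Fin q) (Fin ν × Fin r) ℝ :=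
  Matrix.of fun a p => Md q r (p.1 : ℕ) z a p.2

/-- `U_q(z)` with columns `u(z), u'(z), …, u^{(q−1)}(z)`, where `u_a(z) = z^a`. -/
def Uq (q : ℕ) (z : ℝ) : Matrix (Fin q) (Fin q) ℝ :=
  Matrix.of fun a j => iteratedDeriv (j : ℕ) (fun t : ℝ => t ^ (a : ℕ)) z

/-- `W_r(z)` with rows `w(z), w'(z), …, w^{(r−1)}(z)`, where `w_b(z) = z^b`. -/
def Wrm (r : ℕ) (z : ℝ) : Matrix (Fin r) (Fin r) ℝ :=
  Matrix.of fun i b => iteratedDeriv (i : ℕ) (fun t : ℝ => t ^ (b : ℕ)) z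

/-- `Ũ_m(z)` with entries `C(i,j)·z^{i−j}` for `i ≥ j` and `0` otherwise. -/
def Ut (m : ℕ) (z : ℝ) : Matrix (Fin m) (Fin m) ℝ :=
  Matrix.of fun i j =>
    if (j : ℕ) ≤ (i : ℕ) then (Nat.choose i j : ℝ) * z ^ ((i : ℕ) - (j : ℕ)) else 0

/-- `W̃_m(z)` with entries `C(j,i)·z^{j−i}` for `j ≥ i` and `0` otherwise. -/
def Wt (m : ℕ) (z : ℝ) : Matrix (Fin m) (Fin m) ℝ :=
  Matrix.of fun i j =>
    if (i : ℕ) ≤ (j : ℕ) then (Nat.choose j i : ℝ) * z ^ ((j : ℕ) - (i : ℕ)) else 0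

/-- `D_m`, the diagonal matrix with `(i,i)` entry `i!`. -/
def Dm (m : ℕ) : Matrix (Fin m) (Fin m) ℝ :=
  Matrix.diagonal fun i => (Nat.factorial (i : ℕ) : ℝ)

/-- The block matrix `Â` whose `(i,j)` block has `(k,l)` entry `C(i+j,i)` if `k+l = i+j`, else 0. -/
def Ahat (q r μ ν : ℕ) : Matrix (Fin μ × Fin q) (Fin ν × Fin r) ℝ :=
  Matrix.of fun p p' =>
    if (p.2 : ℕ) + (p'.2 : ℕ) = (p.1 : ℕ) + (p'.1 : ℕ) then
      (Nat.choose ((p.1 : ℕ) + (p'.1 : ℕ)) (p.1 : ℕ) : ℝ)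
    else 0

/-- `F(z) ∈ ℝ^{r×(r−1)}` with `F_{ii} = −z`, `F_{i+1,i} = 1`, else `0`. -/
def Fm (r : ℕ) (z : ℝ) : Matrix (Fin r) (Fin (r - 1)) ℝ :=
  Matrix.of fun a b =>
    if (a : ℕ) = (b : ℕ) then -z else if (a : ℕ) = (b : ℕ) + 1 then 1 else 0

/-- `F'(z)`, the (constant) derivative of `F(z)`: `−1` on the diagonal, `0` elsewhere. -/
def Fm' (r : ℕ) : Matrix (Fin r) (Fin (r - 1)) ℝ :=
  Matrix.of fun a b => if (a : ℕ) = (b : ℕ) then -1 else 0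

/-- `G(z) ∈ ℝ^{r×r}` with entries `z^{j−i−1}` for `j > i`, else `0`. -/
def Gm (r : ℕ) (z : ℝ) : Matrix (Fin r) (Fin r) ℝ :=
  Matrix.of fun i j => if (i : ℕ) < (j : ℕ) then z ^ ((j : ℕ) - (i : ℕ) - 1) else 0

/-- entrywise `j`-th derivative `G^{(n)}(z)`. -/
def Gd (r n : ℕ) (z : ℝ) : Matrix (Fin r) (Fin r) ℝ :=
  Matrix.of fun i j =>
    iteratedDeriv n (fun t : ℝ => if (i : ℕ) < (j : ℕ) then t ^ ((j : ℕ) - (i : ℕ) - 1) else 0) z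

/-- the row vector `w(z)` with entries `z^b`. -/
def wv (r : ℕ) (z : ℝ) : Fin r → ℝ := fun b => z ^ (b : ℕ)

/-- the `n`-th derivative `w^{(n)}(z)`. -/
def wd (r n : ℕ) (z : ℝ) : Fin r → ℝ := fun b => iteratedDeriv n (fun t : ℝ => t ^ (b : ℕ)) z

/-- the `n`-th derivative `u^{(n)}(z)` of the column vector `u(z)` with entries `z^a`. -/
def ud (q n : ℕ) (z : ℝ) : Fin q → ℝ := fun a => iteratedDeriv n (fun t : ℝ => t ^ (a : ℕ)) z

/-- The matrix `K̄(z)`: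
`[[I_q⊗F(z) + S_q⊗F'(z), −ℓ_q fᵀ ⊗ G(z)], [0, I_{ν−q}⊗I_r − S_{ν−q}⊗G(z)]]`. -/
def Kbar (q r ν : ℕ) (z : ℝ) :
    Matrix (Fin ν × Fin r) ((Fin q × Fin (r - 1)) ⊕ (Fin (ν - q) × Fin r)) ℝ :=
  Matrix.of fun p s =>
    match s with
    | Sum.inl c =>
        (if (p.1 : ℕ) = (c.1 : ℕ) then Fm r z p.2 c.2 else 0) +
        (if (p.1 : ℕ) + 1 = (c.1 : ℕ) then Fm' r p.2 c.2 else 0)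
    | Sum.inr c =>
        (if (p.1 : ℕ) = q + (c.1 : ℕ) then (if p.2 = c.2 then 1 else 0) else 0) +
        (if (p.1 : ℕ) + 1 = q + (c.1 : ℕ) then -(Gm r z p.2 c.2) else 0)

/-- `F_k(z) ∈ ℝ^{(r−k)×(r−1−k)}`. -/
def Fmk (r k : ℕ) (z : ℝ) : Matrix (Fin (r - k)) (Fin (r - (k + 1))) ℝ :=
  Matrix.of fun a b =>
    if (a : ℕ) = (b : ℕ) then -z else if (a : ℕ) = (b : ℕ) + 1 then 1 else 0

/-- `F_k'(z)`, the (constant) derivative of `F_k(z)`. -/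
def Fmk' (r k : ℕ) : Matrix (Fin (r - k)) (Fin (r - (k + 1))) ℝ :=
  Matrix.of fun a b => if (a : ℕ) = (b : ℕ) then -1 else 0

/-- `K_k(z) = I_ν ⊗ F_k(z) + S_ν ⊗ F_k'(z)`. -/
def Kk (ν r k : ℕ) (z : ℝ) :
    Matrix (Fin ν × Fin (r - k)) (Fin ν × Fin (r - (k + 1))) ℝ :=
  (1 : Matrix (Fin ν) (Fin ν) ℝ) ⊗ₖ Fmk r k z + Sh ν ⊗ₖ Fmk' r k

/-- `KP ν r z m = K_0(z) · K_1(z) ⋯ K_{m−1}(z)` (so `KP ν r z μ = 𝒦^{μ−1}(z)`). -/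
def KP (ν r : ℕ) (z : ℝ) : (m : ℕ) → Matrix (Fin ν × Fin r) (Fin ν × Fin (r - m)) ℝ
  | 0 => Matrix.of fun p p' => if p.1 = p'.1 ∧ (p.2 : ℕ) = (p'.2 : ℕ) then 1 else 0
  | m + 1 => KP ν r z m * Kk ν r m z

/-- `𝒜^0 = (A^0, A^1, …, A^{ν−1}) ∈ ℝ^{q×νr}` (at `z = 0`). -/
def A0row (q r ν : ℕ) : Matrix (Fin q) (Fin ν × Fin r) ℝ :=
  Matrix.of fun a p =>
    if (a : ℕ) + (p.2 : ℕ) = (p.1 : ℕ) then (Nat.choose (p.1 : ℕ) (a : ℕ) : ℝ) else 0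

/-- `B^k ∈ ℝ^{r×q}` with entries `(−1)^i·C(q,k+1)` if `i+j = k`, else `0`. -/
def Bk (q r k : ℕ) : Matrix (Fin r) (Fin q) ℝ :=
  Matrix.of fun i j =>
    if (i : ℕ) + (j : ℕ) = k then (-1 : ℝ) ^ (i : ℕ) * (Nat.choose q (k + 1) : ℝ) else 0

/-- `𝓑^0 ∈ ℝ^{νr×q}`, the blocks `B^0, …, B^{ν−1}` stacked vertically. -/
def B0cal (q r ν : ℕ) : Matrix (Fin ν × Fin r) (Fin q) ℝ :=
  Matrix.of fun p j => Bk q r (p.1 : ℕ) p.2 j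

/-- Left multiplication by a fixed matrix, as a linear map. -/
def mulLeftLM {m n p : Type*} [Fintype n] (M : Matrix m n ℝ) :
    Matrix n p ℝ →ₗ[ℝ] Matrix m p ℝ where
  toFun X := M * X
  map_add' X Y := Matrix.mul_add M X Y
  map_smul' c X := by simp [Matrix.mul_smul]

/-- The right inverse `𝓜(z)⁺`. -/
def Mplus (q r μ ν : ℕ) (z : ℝ) : Matrix (Fin ν × Fin r) (Fin μ × Fin q) ℝ :=
  ((1 : Matrix (Fin ν) (Fin ν) ℝ) ⊗ₖ (Wrm r z)⁻¹) * (Lmat ν r 0)⁻¹ *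
    (Abar q r μ ν)ᵀ * (Lmat μ q 0)⁻¹ * ((1 : Matrix (Fin μ) (Fin μ) ℝ) ⊗ₖ (Uq q z)⁻¹)

lemma iter_cpow' (n : ℕ) : ∀ (k : ℕ) (c z : ℝ),
    iteratedDeriv n (fun t : ℝ => c * t ^ k) z = c * (Nat.descFactorial k n : ℝ) * z ^ (k - n) := by
  induction n with
  | zero => intro k c z; simp
  | succ n ih =>
    intro k c z
    rw [iteratedDeriv_succ']
    have hd : (deriv fun t : ℝ => c * t ^ k)
        = fun t : ℝ => (c * k) * t ^ (k - 1) := by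
      funext t
      rw [deriv_const_mul _ (differentiableAt_pow k), deriv_pow_field]
      ring
    rw [hd, ih (k-1) (c * k) z]
    cases k with
    | zero => norm_num
    | succ k =>
      rw [Nat.succ_descFactorial_succ]
      push_cast
      ring

lemma iter_pow' (k n : ℕ) (z : ℝ) :
    iteratedDeriv n (fun t : ℝ => t ^ k) z = (Nat.descFactorial k n : ℝ) * z ^ (k - n) := by
  simpa using iter_cpow' n k 1 z

lemma pasc (n t : ℕ) (z : ℝ) :
    (Nat.choose (n+1) (t+1) : ℝ) * z ^ (n - t)
      = (Nat.choose n (t+1) : ℝ) * z ^ (n - (t+1)) * z + (Nat.choose n t : ℝ) * z ^ (n - t) := by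
  rcases lt_trichotomy n t with h | h | h
  · rw [Nat.choose_eq_zero_of_lt h, Nat.choose_eq_zero_of_lt (by omega),
      Nat.choose_eq_zero_of_lt (by omega)]
    simp
  · subst h
    simp [Nat.choose_succ_self]
  · rw [Nat.choose_succ_succ' n t]
    have e : n - (t+1) + 1 = n - t := by omega
    push_cast
    rw [← e, pow_succ]
    ring

lemma keylem (a t : ℕ) (z : ℝ) : ∀ b : ℕ,
    (Nat.choose (a+b) (t+1) : ℝ) * z ^ (a + b - (t+1))
      - (Nat.choose a (t+1) : ℝ) * (z ^ (a - (t+1)) * z ^ b)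
    = ∑ i ∈ Finset.range b, (Nat.choose (a+i) t : ℝ) * (z ^ (a + i - t) * z ^ (b - i - 1)) := by
  intro b
  induction b with
  | zero => simp
  | succ b ih =>
    rw [Finset.sum_range_succ]
    have hsum : ∑ i ∈ Finset.range b,
          (Nat.choose (a+i) t : ℝ) * (z ^ (a + i - t) * z ^ (b + 1 - i - 1))
        = (∑ i ∈ Finset.range b,
            (Nat.choose (a+i) t : ℝ) * (z ^ (a + i - t) * z ^ (b - i - 1))) * z := by
      rw [Finset.sum_mul]
      refine Finset.sum_congr rfl fun i hi => ?_
      have hi' : i < b := Finset.mem_range.1 hi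
      rw [show b + 1 - i - 1 = (b - i - 1) + 1 by omega, pow_succ]
      ring
    rw [hsum, ← ih]
    rw [show a + (b+1) = (a+b) + 1 by ring, show (a+b) + 1 - (t+1) = a + b - t by omega,
      show b + 1 - b - 1 = 0 by omega, pow_zero, mul_one, pasc (a+b) t z, pow_succ]
    ring

theorem statement11 (q r : ℕ) (hq : 0 < q) (hr : 0 < r) :
    ∀ z : ℝ,
      (∀ j : ℕ, 1 ≤ j →
        (1 / (Nat.factorial j : ℝ)) • (Md q r j z - Matrix.vecMulVec (ud q j z) (wv r z)) =
          (1 / (Nat.factorial (j - 1) : ℝ)) • (Md q r (j - 1) z * Gm r z)) ∧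
      (∀ j : ℕ, q ≤ j →
        (1 / (Nat.factorial j : ℝ)) • Md q r j z =
          (1 / (Nat.factorial (j - 1) : ℝ)) • (Md q r (j - 1) z * Gm r z)) ∧
      (∀ m p : ℕ,
        (1 / (Nat.factorial (q - 1 + p + m) : ℝ)) • Md q r (q - 1 + p + m) z =
          (1 / (Nat.factorial (q - 1 + m) : ℝ)) • (Md q r (q - 1 + m) z * (Gm r z) ^ p) ∧
        (1 / (Nat.factorial (q - 1 + m) : ℝ)) • (Md q r (q - 1 + m) z * (Gm r z) ^ p) =
          (1 / (Nat.factorial (q - 1) : ℝ)) • (Md q r (q - 1) z * (Gm r z) ^ (p + m))) := by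
  intro z
  have part1 : ∀ j : ℕ, 1 ≤ j →
      (1 / (Nat.factorial j : ℝ)) • (Md q r j z - Matrix.vecMulVec (ud q j z) (wv r z)) =
        (1 / (Nat.factorial (j - 1) : ℝ)) • (Md q r (j - 1) z * Gm r z) := by
    intro j hj
    obtain ⟨t, rfl⟩ : ∃ t, j = t + 1 := ⟨j - 1, by omega⟩
    rw [Nat.add_sub_cancel]
    ext a b
    simp only [Md, Gm, ud, wv, Matrix.smul_apply, Matrix.sub_apply, Matrix.vecMulVec_apply,
      Matrix.mul_apply, Matrix.of_apply, smul_eq_mul, iter_pow']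
    have hS : (∑ i : Fin r,
          (↑(((a:ℕ) + (i:ℕ)).descFactorial t) * z ^ ((a:ℕ) + (i:ℕ) - t)) *
            (if (i:ℕ) < (b:ℕ) then z ^ ((b:ℕ) - (i:ℕ) - 1) else 0))
        = (Nat.factorial t : ℝ) * ∑ i ∈ Finset.range (b:ℕ),
            (Nat.choose ((a:ℕ)+i) t : ℝ) * (z ^ ((a:ℕ) + i - t) * z ^ ((b:ℕ) - i - 1)) := by
      rw [Fin.sum_univ_eq_sum_range (fun i =>
        (↑(((a:ℕ) + i).descFactorial t) * z ^ ((a:ℕ) + i - t)) *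
          (if i < (b:ℕ) then z ^ ((b:ℕ) - i - 1) else 0)) r]
      rw [← Finset.sum_subset (Finset.range_subset_range.2 b.isLt.le)
        (fun i _ hi => by rw [if_neg (by simpa using hi)]; ring)]
      rw [Finset.mul_sum]
      refine Finset.sum_congr rfl fun i hi => ?_
      rw [if_pos (Finset.mem_range.1 hi), Nat.descFactorial_eq_factorial_mul_choose]
      push_cast
      ring
    rw [hS]
    have h1 : (((t+1).factorial : ℕ) : ℝ) ≠ 0 := Nat.cast_ne_zero.2 (Nat.factorial_ne_zero _)
    have h2 : ((t.factorial : ℕ) : ℝ) ≠ 0 := Nat.cast_ne_zero.2 (Nat.factorial_ne_zero _)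
    rw [← mul_assoc, one_div_mul_cancel h2, one_mul,
      Nat.descFactorial_eq_factorial_mul_choose, Nat.descFactorial_eq_factorial_mul_choose]
    push_cast
    field_simp
    linear_combination (norm := ring_nf) keylem (a:ℕ) t z (b:ℕ)
  have part2 : ∀ j : ℕ, q ≤ j →
      (1 / (Nat.factorial j : ℝ)) • Md q r j z =
        (1 / (Nat.factorial (j - 1) : ℝ)) • (Md q r (j - 1) z * Gm r z) := by
    intro j hj
    have h0 : ud q j z = 0 := by
      funext a
      simp only [ud, iter_pow']
      rw [Nat.descFactorial_eq_zero_iff_lt.2 (lt_of_lt_of_le a.isLt hj)]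
      simp
    have h := part1 j (le_trans hq hj)
    rw [h0] at h
    have hv : Matrix.vecMulVec (0 : Fin q → ℝ) (wv r z) = 0 := by
      ext a b; simp [Matrix.vecMulVec_apply]
    rw [hv, sub_zero] at h
    exact h
  refine ⟨part1, part2, ?_⟩
  have step : ∀ k : ℕ, q - 1 ≤ k →
      (1 / (Nat.factorial (k+1) : ℝ)) • Md q r (k+1) z =
        ((1 / (Nat.factorial k : ℝ)) • Md q r k z) * Gm r z := by
    intro k hk
    have := part2 (k+1) (by omega)
    rw [Nat.add_sub_cancel] at this
    rw [this, Matrix.smul_mul]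
  have gen : ∀ (p k : ℕ), q - 1 ≤ k →
      (1 / (Nat.factorial (k + p) : ℝ)) • Md q r (k + p) z =
        ((1 / (Nat.factorial k : ℝ)) • Md q r k z) * (Gm r z) ^ p := by
    intro p
    induction p with
    | zero => intro k hk; simp
    | succ p ih =>
      intro k hk
      rw [show k + (p+1) = (k + p) + 1 by ring, step (k+p) (by omega),
        ih k hk, pow_succ, Matrix.mul_assoc]
  intro m p
  constructor
  · have := gen p (q - 1 + m) (by omega)
    rw [show q - 1 + m + p = q - 1 + p + m by ring] at this
    rw [this, Matrix.smul_mul]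
  · have := gen m (q - 1) (le_refl _)
    rw [← Matrix.smul_mul, this, Matrix.mul_assoc, ← pow_add, add_comm m p, Matrix.smul_mul]
end
end

section
/- Assume r ≥ 2 and q+1 ≤ ν ≤ q+r−1. Let K̄(z) ∈ ℝ^{νr×(νr−q)} be the block matrix K̄(z) = [[I_q⊗F(z) + S_q⊗F'(z), −ℓ_q·f^T ⊗ G(z)], [0, I_{ν−q}⊗I_r − S_{ν−q}⊗G(z)]], where ℓ_q is the last standard basis column vector of ℝ^q and f is the first standard basis column vector of ℝ^{ν−q}. Then for every z ∈ ℝ: 𝓝^0(z)·K̄(z) = 0, K̄(z) has full column rank νr − q, and the columns of K̄(z) form a basis of the kernel of 𝓝^0(z); in particular dim ker 𝓝^0(z) = νr − q. -/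
open Matrix Kronecker

noncomputable section

section Helpers
open Finset

lemma iterDeriv_pow (m : ℕ) : ∀ (n : ℕ) (z : ℝ),
    iteratedDeriv n (fun t : ℝ => t ^ m) z = (m.descFactorial n : ℝ) * z ^ (m - n) := by
  intro n
  induction n with
  | zero => intro z; simp
  | succ n ih =>
    intro z
    rw [iteratedDeriv_succ]
    have : iteratedDeriv n (fun t : ℝ => t ^ m) =
        fun z => (m.descFactorial n : ℝ) * z ^ (m - n) := funext ih
    rw [this, deriv_const_mul _ (differentiable_pow _ |>.differentiableAt), deriv_pow_field,
      Nat.descFactorial_succ, Nat.sub_sub]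
    push_cast
    ring

lemma hockey (m : ℕ) (z : ℝ) : ∀ (n a : ℕ), a ≤ m →
    (∑ b ∈ range n, (Nat.choose (a + b) m : ℝ) * z ^ (a + b - m) * z ^ (n - b - 1)) =
      (Nat.choose (a + n) (m + 1) : ℝ) * z ^ (a + n - (m + 1)) := by
  intro n
  induction n with
  | zero => intro a ha; simp [Nat.choose_eq_zero_of_lt (Nat.lt_succ_of_le ha)]
  | succ n ih =>
    intro a ha
    rw [sum_range_succ]
    have hz : ∀ b ∈ range n, (Nat.choose (a + b) m : ℝ) * z ^ (a + b - m) * z ^ (n + 1 - b - 1)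
        = ((Nat.choose (a + b) m : ℝ) * z ^ (a + b - m) * z ^ (n - b - 1)) * z := by
      intro b hb
      rw [mem_range] at hb
      have : n + 1 - b - 1 = (n - b - 1) + 1 := by omega
      rw [this, pow_succ]; ring
    rw [sum_congr rfl hz, ← sum_mul, ih a ha]
    have e0 : n + 1 - n - 1 = 0 := by omega
    rw [e0, pow_zero, mul_one]
    rcases Nat.lt_or_ge (a + n) (m + 1) with h | h
    · rcases Nat.lt_or_ge (a + n) m with h2 | h2
      · rw [Nat.choose_eq_zero_of_lt h, Nat.choose_eq_zero_of_lt h2,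
          Nat.choose_eq_zero_of_lt (by omega)]
        simp
      · have h3 : a + n = m := by omega
        rw [h3]
        rw [Nat.choose_eq_zero_of_lt (by omega : m < m + 1)]
        have h4 : a + (n + 1) = m + 1 := by omega
        rw [h4, Nat.choose_self]
        simp
    · have h1 : a + n - (m + 1) + 1 = a + n - m := by omega
      have h2 : a + n + 1 - (m + 1) = a + n - m := by omega
      rw [show a + (n + 1) = (a + n) + 1 by omega, h2, ← h1, pow_succ,
        Nat.choose_succ_succ (a + n) m]
      push_cast
      ring

lemma pascal_id (A k : ℕ) (z : ℝ) :
    (Nat.choose A (k + 1) : ℝ) * z ^ (A - (k + 1)) * (-z)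
      + (Nat.choose (A + 1) (k + 1) : ℝ) * z ^ (A + 1 - (k + 1))
      + (Nat.choose A k : ℝ) * z ^ (A - k) * (-1) = 0 := by
  rcases Nat.lt_or_ge A k with h | h
  · rw [Nat.choose_eq_zero_of_lt (by omega), Nat.choose_eq_zero_of_lt (by omega),
      Nat.choose_eq_zero_of_lt (by omega)]
    simp
  rcases Nat.eq_or_lt_of_le h with h2 | h2
  · subst h2
    simp [Nat.choose_eq_zero_of_lt (Nat.lt_succ_self _), Nat.choose_self, Nat.sub_self]
  · rw [Nat.choose_succ_succ A k,
      show A + 1 - (k + 1) = A - k by omega,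
      show A - (k + 1) = A - k - 1 by omega,
      show A - k = (A - k - 1) + 1 by omega]
    push_cast
    rw [pow_succ]
    ring

lemma sum_ite_const {α : Type*} [Fintype α] (P : Prop) [Decidable P] (f : α → ℝ) :
    (∑ b : α, if P then f b else 0) = if P then (∑ b : α, f b) else 0 := by
  split <;> simp

lemma sum_fin_unique {n k : ℕ} (P : ℕ → Prop) [DecidablePred P] (g : Fin n → ℝ)
    (hiff : ∀ m, m < n → (P m ↔ m = k)) (hk : k < n) :
    (∑ i : Fin n, if P (i : ℕ) then g i else 0) = g ⟨k, hk⟩ := by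
  rw [Finset.sum_eq_single ⟨k, hk⟩]
  · rw [if_pos]; exact (hiff k hk).mpr rfl
  · intro b _ hb
    rw [if_neg]
    intro e
    exact hb (by ext; exact (hiff b b.isLt).mp e)
  · simp

lemma sum_fin_none {n : ℕ} (P : ℕ → Prop) [DecidablePred P] (g : Fin n → ℝ)
    (hno : ∀ m, m < n → ¬ P m) :
    (∑ i : Fin n, if P (i : ℕ) then g i else 0) = 0 := by
  apply Finset.sum_eq_zero
  intro i _
  exact if_neg (hno i i.isLt)

lemma L1l {n k : ℕ} (g : Fin n → ℝ) :
    (∑ i : Fin n, if (i : ℕ) = k then g i else 0) =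
      if h : k < n then g ⟨k, h⟩ else 0 := by
  split
  · next h => exact sum_fin_unique (fun m => m = k) g (fun m _ => Iff.rfl) h
  · next h => exact sum_fin_none (fun m => m = k) g (fun m hm e => h (e ▸ hm))

lemma L2l {n k : ℕ} (g : Fin n → ℝ) :
    (∑ i : Fin n, if (i : ℕ) + 1 = k then g i else 0) =
      if h : 1 ≤ k ∧ k - 1 < n then g ⟨k - 1, h.2⟩ else 0 := by
  split
  · next h => exact sum_fin_unique (fun m => m + 1 = k) g (fun m _ => by omega) h.2
  · next h => exact sum_fin_none (fun m => m + 1 = k) g (fun m hm e => by omega)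

lemma L1r {n k : ℕ} (g : Fin n → ℝ) :
    (∑ i : Fin n, if k = (i : ℕ) then g i else 0) =
      if h : k < n then g ⟨k, h⟩ else 0 := by
  split
  · next h => exact sum_fin_unique (fun m => k = m) g (fun m _ => by omega) h
  · next h => exact sum_fin_none (fun m => k = m) g (fun m hm e => by omega)

lemma L3r {n k m : ℕ} (g : Fin n → ℝ) :
    (∑ i : Fin n, if k = m + (i : ℕ) then g i else 0) =
      if h : m ≤ k ∧ k - m < n then g ⟨k - m, h.2⟩ else 0 := by
  split
  · next h => exact sum_fin_unique (fun j => k = m + j) g (fun j _ => by omega) h.2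
  · next h => exact sum_fin_none (fun j => k = m + j) g (fun j hj e => by omega)

lemma L4r {n k : ℕ} (g : Fin n → ℝ) :
    (∑ i : Fin n, if k = (i : ℕ) + 1 then g i else 0) =
      if h : 1 ≤ k ∧ k - 1 < n then g ⟨k - 1, h.2⟩ else 0 := by
  split
  · next h => exact sum_fin_unique (fun j => k = j + 1) g (fun j _ => by omega) h.2
  · next h => exact sum_fin_none (fun j => k = j + 1) g (fun j hj e => by omega)

lemma sum_range_ite_lt (f : ℕ → ℝ) (c r : ℕ) (h : c ≤ r) :
    (∑ b ∈ range r, if b < c then f b else 0) = ∑ b ∈ range c, f b := by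
  rw [← Finset.sum_filter]
  congr 1
  ext b
  simp only [mem_filter, mem_range]
  omega

lemma Ncal0_apply (q r ν : ℕ) (z : ℝ) (a : Fin q) (p : Fin ν × Fin r) :
    Ncal0 q r ν z a p =
      (Nat.choose ((a : ℕ) + (p.2 : ℕ)) (p.1 : ℕ) : ℝ) *
        z ^ ((a : ℕ) + (p.2 : ℕ) - (p.1 : ℕ)) := by
  unfold Ncal0 Md
  simp only [Matrix.of_apply]
  rw [iterDeriv_pow, Nat.descFactorial_eq_factorial_mul_choose]
  have hf : ((Nat.factorial (p.1 : ℕ) : ℝ)) ≠ 0 := by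
    exact_mod_cast Nat.factorial_ne_zero _
  push_cast
  field_simp

lemma Fm_eq (r : ℕ) (z : ℝ) (a : Fin r) (b : Fin (r - 1)) :
    Fm r z a b = (if (a : ℕ) = (b : ℕ) then -z else 0) +
      (if (a : ℕ) = (b : ℕ) + 1 then 1 else 0) := by
  unfold Fm
  simp only [Matrix.of_apply]
  split_ifs <;> first | omega | ring

end Helpers

lemma ite_add_split (P : Prop) [Decidable P] (u v : ℝ) :
    (if P then u + v else 0) = (if P then u else 0) + (if P then v else 0) := by
  split <;> simp


lemma NK_zero (q r ν : ℕ) (hq : 0 < q) (hr : 2 ≤ r) (hν1 : q + 1 ≤ ν) (z : ℝ) :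
    Ncal0 q r ν z * Kbar q r ν z = 0 := by
  ext a s
  rw [Matrix.mul_apply, Matrix.zero_apply, Fintype.sum_prod_type]
  rcases s with ⟨c₁, c₂⟩ | ⟨c₁, c₂⟩
  · have hc1 : (c₁ : ℕ) < q := c₁.isLt
    have hc2 : (c₂ : ℕ) < r - 1 := c₂.isLt
    simp only [Kbar, Matrix.of_apply, Ncal0_apply, Fm_eq, Fm']
    simp only [mul_add, mul_ite, mul_zero, mul_one, ite_add_split,
      Finset.sum_add_distrib, sum_ite_const, L1l, L2l]
    have h1 : (c₁ : ℕ) < ν := by omega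
    have h2 : (c₂ : ℕ) < r := by omega
    have h3 : (c₂ : ℕ) + 1 < r := by omega
    rcases Nat.eq_zero_or_pos (c₁ : ℕ) with h0 | h0
    · simp only [dif_pos h1, dif_pos h2, dif_pos h3,
        dif_neg (show ¬(1 ≤ (c₁:ℕ) ∧ (c₁:ℕ) - 1 < ν) by omega), add_zero, h0]
      simp only [dif_pos (show 0 < ν by omega),
        dif_neg (show ¬(1 ≤ 0 ∧ 0 < ν) by omega), add_zero]
      simp only [Nat.sub_zero, Nat.choose_zero_right, Nat.cast_one, one_mul, mul_one]
      rw [show (↑a:ℕ) + (↑c₂ + 1) = (↑a + ↑c₂) + 1 by omega, pow_succ]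
      ring
    · have h4 : 1 ≤ (c₁:ℕ) ∧ (c₁:ℕ) - 1 < ν := by omega
      simp only [dif_pos h1, dif_pos h2, dif_pos h3, dif_pos h4]
      have hp := pascal_id ((a:ℕ) + (c₂:ℕ)) ((c₁:ℕ) - 1) z
      rw [show (c₁:ℕ) - 1 + 1 = (c₁:ℕ) by omega] at hp
      rw [show (a:ℕ) + ((c₂:ℕ) + 1) = ((a:ℕ) + (c₂:ℕ)) + 1 by omega]
      linear_combination hp
  · have hc1 : (c₁ : ℕ) < ν - q := c₁.isLt
    have hc2 : (c₂ : ℕ) < r := c₂.isLt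
    simp only [Kbar, Matrix.of_apply, Ncal0_apply, Gm]
    simp only [mul_add, mul_ite, mul_zero, mul_one, mul_neg,
      Finset.sum_add_distrib, Finset.sum_neg_distrib, sum_ite_const, L1l, L2l,
      Finset.sum_ite_eq', Finset.mem_univ, if_true]
    have h5 : q + (c₁:ℕ) < ν := by omega
    have h4 : 1 ≤ q + (c₁:ℕ) ∧ q + (c₁:ℕ) - 1 < ν := by omega
    simp only [dif_pos h5, dif_pos h4]
    rw [Fin.sum_univ_eq_sum_range (fun b => if b < (c₂:ℕ) then
      ((Nat.choose ((a:ℕ) + b) (q + (c₁:ℕ) - 1)) : ℝ) * z ^ ((a:ℕ) + b - (q + (c₁:ℕ) - 1)) *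
        z ^ ((c₂:ℕ) - b - 1) else 0) r]
    rw [sum_range_ite_lt _ _ _ (le_of_lt hc2)]
    rw [hockey (q + (c₁:ℕ) - 1) z (c₂:ℕ) (a:ℕ) (by omega)]
    rw [show q + (c₁:ℕ) - 1 + 1 = q + (c₁:ℕ) by omega]
    ring

lemma Kbar_mulVec (q r ν : ℕ) (z : ℝ)
    (x : ((Fin q × Fin (r - 1)) ⊕ (Fin (ν - q) × Fin r)) → ℝ)
    (iv : ℕ) (hiv : iv < ν) (b : Fin r) :
    (Kbar q r ν z).mulVec x (⟨iv, hiv⟩, b) =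
      (if h : iv < q then
        ∑ c₂ : Fin (r - 1), Fm r z b c₂ * x (Sum.inl (⟨iv, h⟩, c₂)) else 0) +
      (if h : iv + 1 < q then
        ∑ c₂ : Fin (r - 1), Fm' r b c₂ * x (Sum.inl (⟨iv + 1, h⟩, c₂)) else 0) +
      ((if h : q ≤ iv ∧ iv - q < ν - q then
        x (Sum.inr (⟨iv - q, h.2⟩, b)) else 0) +
      (if h : q ≤ iv + 1 ∧ iv + 1 - q < ν - q then
        ∑ c₂ : Fin r, -(Gm r z b c₂ * x (Sum.inr (⟨iv + 1 - q, h.2⟩, c₂))) else 0)) := by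
  simp only [Matrix.mulVec, dotProduct, Fintype.sum_sum_type, Fintype.sum_prod_type]
  simp only [Kbar, Matrix.of_apply]
  simp only [add_mul, ite_mul, zero_mul, one_mul, neg_mul,
    Finset.sum_add_distrib, sum_ite_const, L1r, L3r, Finset.sum_ite_eq, Finset.mem_univ,
    if_true]

lemma Fm_sum_zero (r : ℕ) (hr : 2 ≤ r) (z : ℝ) (y : Fin (r - 1) → ℝ)
    (h : ∀ bb : Fin r, (∑ c₂ : Fin (r - 1), Fm r z bb c₂ * y c₂) = 0) :
    ∀ b, y b = 0 := by
  have hexp : ∀ (bv : ℕ) (hbv : bv < r),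
      ((if h : bv < r - 1 then -(z * y ⟨bv, h⟩) else 0) +
        (if h : 1 ≤ bv ∧ bv - 1 < r - 1 then y ⟨bv - 1, h.2⟩ else 0)) = 0 := by
    intro bv hbv
    have h1 := h ⟨bv, hbv⟩
    simp only [Fm_eq, add_mul, ite_mul, zero_mul, one_mul, neg_mul,
      Finset.sum_add_distrib, L1r, L4r] at h1
    exact h1
  suffices H : ∀ (j bv : ℕ) (hbv : bv < r - 1), r - 1 ≤ bv + j + 1 → y ⟨bv, hbv⟩ = 0 by
    intro b
    exact H (r - 1) (b : ℕ) b.isLt (by omega)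
  intro j
  induction j with
  | zero =>
    intro bv hbv hb
    have h1 := hexp (r - 1) (by omega)
    rw [dif_neg (show ¬ (r - 1 < r - 1) by omega),
      dif_pos (show 1 ≤ r - 1 ∧ r - 1 - 1 < r - 1 by omega), zero_add] at h1
    have hbe : bv = r - 1 - 1 := by omega
    subst hbe
    exact h1
  | succ j ih =>
    intro bv hbv hb
    rcases Nat.lt_or_ge (bv + 1) (r - 1) with hlt | hge
    · have h1 := hexp (bv + 1) (by omega)
      rw [dif_pos hlt, dif_pos (show 1 ≤ bv + 1 ∧ bv + 1 - 1 < r - 1 by omega)] at h1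
      rw [ih (bv + 1) hlt (by omega)] at h1
      simp only [mul_zero, neg_zero, zero_add, Nat.add_sub_cancel] at h1
      exact h1
    · have h1 := hexp (r - 1) (by omega)
      rw [dif_neg (show ¬ (r - 1 < r - 1) by omega),
        dif_pos (show 1 ≤ r - 1 ∧ r - 1 - 1 < r - 1 by omega), zero_add] at h1
      have hbe : bv = r - 1 - 1 := by omega
      subst hbe
      exact h1

lemma Kbar_inj (q r ν : ℕ) (hq : 0 < q) (hr : 2 ≤ r) (hν1 : q + 1 ≤ ν) (z : ℝ)
    (x : ((Fin q × Fin (r - 1)) ⊕ (Fin (ν - q) × Fin r)) → ℝ)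
    (hx : (Kbar q r ν z).mulVec x = 0) : x = 0 := by
  have hrow : ∀ (iv : ℕ) (hiv : iv < ν) (b : Fin r),
      (if h : iv < q then
        ∑ c₂ : Fin (r - 1), Fm r z b c₂ * x (Sum.inl (⟨iv, h⟩, c₂)) else 0) +
      (if h : iv + 1 < q then
        ∑ c₂ : Fin (r - 1), Fm' r b c₂ * x (Sum.inl (⟨iv + 1, h⟩, c₂)) else 0) +
      ((if h : q ≤ iv ∧ iv - q < ν - q then
        x (Sum.inr (⟨iv - q, h.2⟩, b)) else 0) +
      (if h : q ≤ iv + 1 ∧ iv + 1 - q < ν - q then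
        ∑ c₂ : Fin r, -(Gm r z b c₂ * x (Sum.inr (⟨iv + 1 - q, h.2⟩, c₂))) else 0)) = 0 := by
    intro iv hiv b
    have h0 := congrFun hx (⟨iv, hiv⟩, b)
    rw [Kbar_mulVec] at h0
    simpa using h0
  have hR : ∀ (k : ℕ) (d : Fin (ν - q)) (b : Fin r), ν - q ≤ (d : ℕ) + k + 1 →
      x (Sum.inr (d, b)) = 0 := by
    intro k
    induction k with
    | zero =>
      intro d b hd
      have hdlt := d.isLt
      have h1 := hrow (q + (d : ℕ)) (by omega) b
      rw [dif_neg (show ¬ (q + (d:ℕ) < q) by omega),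
        dif_neg (show ¬ (q + (d:ℕ) + 1 < q) by omega),
        dif_pos (show q ≤ q + (d:ℕ) ∧ q + (d:ℕ) - q < ν - q from ⟨by omega, by omega⟩),
        dif_neg (show ¬ (q ≤ q + (d:ℕ) + 1 ∧ q + (d:ℕ) + 1 - q < ν - q) by omega)] at h1
      simp only [show q + (d:ℕ) - q = (d:ℕ) by omega, Fin.eta, zero_add, add_zero] at h1
      exact h1
    | succ k ih =>
      intro d b hd
      have hdlt := d.isLt
      rcases Nat.lt_or_ge ((d : ℕ) + 1) (ν - q) with hlt | hge
      · have h1 := hrow (q + (d : ℕ)) (by omega) b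
        rw [dif_neg (show ¬ (q + (d:ℕ) < q) by omega),
          dif_neg (show ¬ (q + (d:ℕ) + 1 < q) by omega),
          dif_pos (show q ≤ q + (d:ℕ) ∧ q + (d:ℕ) - q < ν - q from ⟨by omega, by omega⟩),
          dif_pos (show q ≤ q + (d:ℕ) + 1 ∧ q + (d:ℕ) + 1 - q < ν - q from
            ⟨by omega, by omega⟩)] at h1
        simp only [show q + (d:ℕ) - q = (d:ℕ) by omega,
          show q + (d:ℕ) + 1 - q = (d:ℕ) + 1 by omega, Fin.eta, zero_add] at h1
        have hz : ∀ c₂ : Fin r, x (Sum.inr (⟨(d:ℕ) + 1, hlt⟩, c₂)) = 0 :=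
          fun c₂ => ih ⟨(d:ℕ) + 1, hlt⟩ c₂ (show ν - q ≤ (d:ℕ) + 1 + k + 1 by omega)
        simp only [hz, mul_zero, neg_zero, Finset.sum_const_zero, add_zero] at h1
        exact h1
      · have h1 := hrow (q + (d : ℕ)) (by omega) b
        rw [dif_neg (show ¬ (q + (d:ℕ) < q) by omega),
          dif_neg (show ¬ (q + (d:ℕ) + 1 < q) by omega),
          dif_pos (show q ≤ q + (d:ℕ) ∧ q + (d:ℕ) - q < ν - q from ⟨by omega, by omega⟩),
          dif_neg (show ¬ (q ≤ q + (d:ℕ) + 1 ∧ q + (d:ℕ) + 1 - q < ν - q) by omega)] at h1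
        simp only [show q + (d:ℕ) - q = (d:ℕ) by omega, Fin.eta, zero_add, add_zero] at h1
        exact h1
  have hxR : ∀ (d : Fin (ν - q)) (b : Fin r), x (Sum.inr (d, b)) = 0 :=
    fun d b => hR (ν - q) d b (by omega)
  have hLk : ∀ (k : ℕ) (i : Fin q) (b : Fin (r - 1)), q ≤ (i : ℕ) + k + 1 →
      x (Sum.inl (i, b)) = 0 := by
    intro k
    induction k with
    | zero =>
      intro i b hi
      have hilt := i.isLt
      have hrowi : ∀ bb : Fin r,
          (∑ c₂ : Fin (r - 1), Fm r z bb c₂ * x (Sum.inl (i, c₂))) = 0 := by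
        intro bb
        have h1 := hrow (i : ℕ) (by omega) bb
        rw [dif_pos (show (i:ℕ) < q from hilt),
          dif_neg (show ¬ ((i:ℕ) + 1 < q) by omega),
          dif_neg (show ¬ (q ≤ (i:ℕ) ∧ (i:ℕ) - q < ν - q) by omega),
          dif_pos (show q ≤ (i:ℕ) + 1 ∧ (i:ℕ) + 1 - q < ν - q from ⟨by omega, by omega⟩)] at h1
        simp only [hxR, mul_zero, neg_zero, Finset.sum_const_zero, add_zero, zero_add,
          Fin.eta] at h1
        exact h1
      exact Fm_sum_zero r hr z _ hrowi b
    | succ k ih =>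
      intro i b hi
      have hilt := i.isLt
      rcases Nat.lt_or_ge ((i : ℕ) + 1) q with hlt | hge
      · have hrowi : ∀ bb : Fin r,
            (∑ c₂ : Fin (r - 1), Fm r z bb c₂ * x (Sum.inl (i, c₂))) = 0 := by
          intro bb
          have h1 := hrow (i : ℕ) (by omega) bb
          rw [dif_pos (show (i:ℕ) < q from hilt), dif_pos hlt,
            dif_neg (show ¬ (q ≤ (i:ℕ) ∧ (i:ℕ) - q < ν - q) by omega),
            dif_neg (show ¬ (q ≤ (i:ℕ) + 1 ∧ (i:ℕ) + 1 - q < ν - q) by omega)] at h1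
          have hz : ∀ c₂ : Fin (r - 1), x (Sum.inl (⟨(i:ℕ) + 1, hlt⟩, c₂)) = 0 :=
            fun c₂ => ih ⟨(i:ℕ) + 1, hlt⟩ c₂ (show q ≤ (i:ℕ) + 1 + k + 1 by omega)
          simp only [hz, mul_zero, Finset.sum_const_zero, add_zero, zero_add, Fin.eta] at h1
          exact h1
        exact Fm_sum_zero r hr z _ hrowi b
      · have hrowi : ∀ bb : Fin r,
            (∑ c₂ : Fin (r - 1), Fm r z bb c₂ * x (Sum.inl (i, c₂))) = 0 := by
          intro bb
          have h1 := hrow (i : ℕ) (by omega) bb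
          rw [dif_pos (show (i:ℕ) < q from hilt),
            dif_neg (show ¬ ((i:ℕ) + 1 < q) by omega),
            dif_neg (show ¬ (q ≤ (i:ℕ) ∧ (i:ℕ) - q < ν - q) by omega),
            dif_pos (show q ≤ (i:ℕ) + 1 ∧ (i:ℕ) + 1 - q < ν - q from
              ⟨by omega, by omega⟩)] at h1
          simp only [hxR, mul_zero, neg_zero, Finset.sum_const_zero, add_zero, zero_add,
            Fin.eta] at h1
          exact h1
        exact Fm_sum_zero r hr z _ hrowi b
  funext s
  rcases s with ⟨i, b⟩ | ⟨d, b⟩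
  · exact hLk q i b (by omega)
  · exact hxR d b

def Csel (q r ν : ℕ) : Matrix (Fin ν × Fin r) (Fin q) ℝ :=
  Matrix.of fun p j => if (p.1 : ℕ) = (j : ℕ) ∧ (p.2 : ℕ) = 0 then 1 else 0

def Pasc (q : ℕ) (z : ℝ) : Matrix (Fin q) (Fin q) ℝ :=
  Matrix.of fun a j => (Nat.choose (a : ℕ) (j : ℕ) : ℝ) * z ^ ((a : ℕ) - (j : ℕ))

lemma NC_eq (q r ν : ℕ) (hq : 0 < q) (hr : 2 ≤ r) (hν1 : q + 1 ≤ ν) (z : ℝ) :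
    Ncal0 q r ν z * Csel q r ν = Pasc q z := by
  ext a j
  rw [Matrix.mul_apply, Fintype.sum_prod_type]
  simp only [Ncal0_apply, Csel, Matrix.of_apply, mul_ite, mul_one, mul_zero, ite_and,
    sum_ite_const, L1l]
  rw [dif_pos (show (j:ℕ) < ν by omega), dif_pos (show 0 < r by omega)]
  simp only [Pasc, Matrix.of_apply, Nat.add_zero]

lemma Pasc_det (q : ℕ) (z : ℝ) : (Pasc q z).det = 1 := by
  rw [Matrix.det_of_lowerTriangular (Pasc q z)
    (by
      intro i j hij
      simp only [Pasc, Matrix.of_apply]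
      rw [Nat.choose_eq_zero_of_lt (by exact hij), Nat.cast_zero, zero_mul])]
  simp [Pasc, Nat.choose_self]

lemma N_surj (q r ν : ℕ) (hq : 0 < q) (hr : 2 ≤ r) (hν1 : q + 1 ≤ ν) (z : ℝ) :
    Function.Surjective (Ncal0 q r ν z).mulVecLin := by
  intro y
  have hdet : IsUnit (Pasc q z).det := by rw [Pasc_det]; exact isUnit_one
  refine ⟨(Csel q r ν).mulVec ((Pasc q z)⁻¹.mulVec y), ?_⟩
  rw [Matrix.mulVecLin_apply, Matrix.mulVec_mulVec, NC_eq q r ν hq hr hν1 z,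
    Matrix.mulVec_mulVec, Matrix.mul_nonsing_inv _ hdet, Matrix.one_mulVec]

theorem statement12 (q r ν : ℕ) (hq : 0 < q) (hr : 2 ≤ r)
    (hν1 : q + 1 ≤ ν) (hν2 : ν ≤ q + r - 1) :
    ∀ z : ℝ,
      Ncal0 q r ν z * Kbar q r ν z = 0 ∧
      (Kbar q r ν z).rank = ν * r - q ∧
      Function.Injective (Kbar q r ν z).mulVecLin ∧
      LinearMap.range (Kbar q r ν z).mulVecLin = LinearMap.ker (Ncal0 q r ν z).mulVecLin ∧
      Module.finrank ℝ (LinearMap.ker (Ncal0 q r ν z).mulVecLin) = ν * r - q := by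
  intro z
  have hNK := NK_zero q r ν hq hr hν1 z
  have hinj : Function.Injective (Kbar q r ν z).mulVecLin := by
    rw [← LinearMap.ker_eq_bot, LinearMap.ker_eq_bot']
    intro x hx0
    exact Kbar_inj q r ν hq hr hν1 z x (by simpa [Matrix.mulVecLin_apply] using hx0)
  have hcard : Fintype.card ((Fin q × Fin (r - 1)) ⊕ (Fin (ν - q) × Fin r)) = ν * r - q := by
    simp only [Fintype.card_sum, Fintype.card_prod, Fintype.card_fin]
    have h1 : q * (r - 1) + q = q * r := by
      have e : r - 1 + 1 = r := by omega
      calc q * (r - 1) + q = q * ((r - 1) + 1) := by ring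
        _ = q * r := by rw [e]
    have h2 : (ν - q) * r + q * r = ν * r := by
      have e : ν - q + q = ν := by omega
      calc (ν - q) * r + q * r = (ν - q + q) * r := by ring
        _ = ν * r := by rw [e]
    omega
  have hrngdim : Module.finrank ℝ (LinearMap.range (Kbar q r ν z).mulVecLin) = ν * r - q := by
    rw [LinearMap.finrank_range_of_inj hinj, Module.finrank_fintype_fun_eq_card, hcard]
  have hkerdim : Module.finrank ℝ (LinearMap.ker (Ncal0 q r ν z).mulVecLin) = ν * r - q := by
    have h3 := LinearMap.finrank_range_add_finrank_ker (Ncal0 q r ν z).mulVecLin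
    rw [LinearMap.range_eq_top.mpr (N_surj q r ν hq hr hν1 z), finrank_top,
      Module.finrank_fintype_fun_eq_card, Module.finrank_fintype_fun_eq_card] at h3
    simp only [Fintype.card_fin, Fintype.card_prod] at h3
    omega
  have hrange : LinearMap.range (Kbar q r ν z).mulVecLin
      = LinearMap.ker (Ncal0 q r ν z).mulVecLin := by
    have hle : LinearMap.range (Kbar q r ν z).mulVecLin
        ≤ LinearMap.ker (Ncal0 q r ν z).mulVecLin := by
      rintro _ ⟨v, rfl⟩
      rw [LinearMap.mem_ker, Matrix.mulVecLin_apply, Matrix.mulVecLin_apply,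
        Matrix.mulVec_mulVec, hNK, Matrix.zero_mulVec]
    exact Submodule.eq_of_le_of_finrank_eq hle (by rw [hrngdim, hkerdim])
  have hrank : (Kbar q r ν z).rank = ν * r - q := by
    rw [Matrix.rank, hrngdim]
  exact ⟨hNK, hrank, hinj, hrange, hkerdim⟩
end
end

section
/- Assume ν ≤ q. For 0 ≤ k ≤ r−2 let F_k(z) ∈ ℝ^{(r−k)×(r−1−k)} have entries (F_k)_{ii}(z) = −z and (F_k)_{i+1,i}(z) = 1 and 0 otherwise, and set K_k(z) = I_ν⊗F_k(z) + S_ν⊗F_k'(z) ∈ ℝ^{ν(r−k)×ν(r−1−k)}. If μ ≤ r−1, let 𝒦^{μ−1}(z) = K_0(z)·K_1(z)⋯K_{μ−1}(z) ∈ ℝ^{νr×ν(r−μ)}. Then, for every z ∈ ℝ: if μ ≤ r−1 the kernel of 𝓝(z) is spanned by the columns of 𝒦^{μ−1}(z) and has dimension ν(r−μ), while if μ ≥ r the kernel of 𝓝(z) is {0}. In all cases rank 𝓝(z) = ν·min{μ,r}; in particular 𝓝(z) has full column rank if and only if μ ≥ r. -/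
open Matrix Kronecker

noncomputable section

namespace St14
open Polynomial

noncomputable section

variable {ν d : ℕ}

lemma fin_sum_natcollapse {M : Type*} [AddCommMonoid M] (d m : ℕ) (f : Fin d → M) :
    (∑ b : Fin d, if m = (b : ℕ) then f b else 0) = if h : m < d then f ⟨m, h⟩ else 0 := by
  by_cases h : m < d
  · rw [dif_pos h, Finset.sum_eq_single (⟨m, h⟩ : Fin d)]
    · simp
    · intro b _ hb
      rw [if_neg]
      intro hc
      exact hb (by ext; simp [← hc])
    · simp
  · rw [dif_neg h, Finset.sum_eq_zero]
    intro b _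
    rw [if_neg]
    intro hc
    exact h (hc ▸ b.isLt)

lemma range_to_fin_sum {M : Type*} [AddCommMonoid M] (n : ℕ) (j : Fin n) (F : ℕ → M) :
    (∑ k ∈ Finset.range ((j : ℕ) + 1), F k) = ∑ k : Fin n, if (k : ℕ) ≤ (j : ℕ) then F k else 0 := by
  have h1 : (∑ k : Fin n, if (k : ℕ) ≤ (j : ℕ) then F k else 0)
      = ∑ k ∈ Finset.range n, if k ≤ (j : ℕ) then F k else 0 :=
    Fin.sum_univ_eq_sum_range (fun k => if k ≤ (j : ℕ) then F k else 0) n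
  rw [h1, ← Finset.sum_subset (Finset.range_subset_range.2 j.isLt)
    (fun k _ hk => if_neg (fun hc => hk (Finset.mem_range.2 (by omega))))]
  exact Finset.sum_congr rfl fun k hk =>
    (if_pos (by rw [Finset.mem_range] at hk; omega)).symm

def Pd (ν d : ℕ) (y : Fin ν × Fin d → ℝ) (j : Fin ν) : ℝ[X] :=
  ∑ b : Fin d, C (y (j, b)) * X ^ (b : ℕ)

lemma Pd_coeff (y : Fin ν × Fin d → ℝ) (j : Fin ν) (m : ℕ) :
    (Pd ν d y j).coeff m = if h : m < d then y (j, ⟨m, h⟩) else 0 := by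
  rw [Pd, finset_sum_coeff]
  simp only [coeff_C_mul, coeff_X_pow, mul_ite, mul_one, mul_zero]
  exact fin_sum_natcollapse d m _

def gtup (ν : ℕ) (p : Fin ν → ℝ[X]) (l : Fin ν) : ℝ[X] :=
  ∑ j : Fin ν, if (l : ℕ) ≤ (j : ℕ) then hasseDeriv ((j : ℕ) - (l : ℕ)) (p j) else 0

def gd (ν d : ℕ) (y : Fin ν × Fin d → ℝ) : Fin ν → ℝ[X] :=
  gtup ν (Pd ν d y)

lemma hasse_coeff_zero {p : ℝ[X]} {d : ℕ} (hp : ∀ s, d ≤ s → p.coeff s = 0) (k m : ℕ)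
    (hm : d ≤ m) : (hasseDeriv k p).coeff m = 0 := by
  rw [hasseDeriv_coeff, hp _ (le_trans hm (Nat.le_add_right m k)), mul_zero]

lemma gd_coeff_zero (y : Fin ν × Fin d → ℝ) (l : Fin ν) (m : ℕ) (hm : d ≤ m) :
    (gd ν d y l).coeff m = 0 := by
  rw [gd, gtup, finset_sum_coeff, Finset.sum_eq_zero]
  intro j _
  split
  · apply hasse_coeff_zero _ _ _ hm
    intro s hs
    rw [Pd_coeff, dif_neg (by omega)]
  · simp


lemma hasse_comp' (i j : ℕ) (f : ℝ[X]) :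
    hasseDeriv i (hasseDeriv j f) = (i + j).choose i • hasseDeriv (i + j) f := by
  have h := Polynomial.hasseDeriv_comp (R := ℝ) i j
  simpa using LinearMap.congr_fun h f

lemma key1 (ν a : ℕ) (p : Fin ν → ℝ[X]) :
    (∑ j : Fin ν, hasseDeriv (j : ℕ) (X ^ a * p j))
      = ∑ l : Fin ν, hasseDeriv (l : ℕ) (X ^ a) * gtup ν p l := by
  have step : ∀ j : Fin ν, hasseDeriv (j : ℕ) (X ^ a * p j)
      = ∑ l : Fin ν, if (l : ℕ) ≤ (j : ℕ) then
          hasseDeriv (l : ℕ) (X ^ a) * hasseDeriv ((j : ℕ) - (l : ℕ)) (p j) else 0 := by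
    intro j
    rw [hasseDeriv_mul, Finset.Nat.sum_antidiagonal_eq_sum_range_succ_mk,
      range_to_fin_sum ν j (fun k => hasseDeriv k (X ^ a) * hasseDeriv ((j : ℕ) - k) (p j))]
  rw [Finset.sum_congr rfl (fun j _ => step j), Finset.sum_comm]
  refine Finset.sum_congr rfl fun l _ => ?_
  rw [gtup, Finset.mul_sum]
  refine Finset.sum_congr rfl fun j _ => ?_
  split <;> simp

lemma deriv_iter_eval (p : ℝ[X]) (n : ℕ) :
    deriv^[n] (fun t : ℝ => Polynomial.eval t p)
      = fun t => Polynomial.eval t ((derivative (R := ℝ))^[n] p) := by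
  induction n with
  | zero => simp
  | succ n ih =>
    rw [Function.iterate_succ_apply', ih, Function.iterate_succ_apply']
    funext t
    exact Polynomial.deriv _

lemma iteratedDeriv_pow_eq (n m : ℕ) (z : ℝ) :
    iteratedDeriv n (fun t : ℝ => t ^ m) z
      = (n.factorial : ℝ) * Polynomial.eval z (hasseDeriv n (X ^ m : ℝ[X])) := by
  have h0 : (fun t : ℝ => t ^ m) = fun t => Polynomial.eval t (X ^ m : ℝ[X]) := by
    funext t; simp
  have h1 : (derivative (R := ℝ))^[n] (X ^ m : ℝ[X])
      = n.factorial • hasseDeriv n (X ^ m : ℝ[X]) := by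
    rw [← Polynomial.factorial_smul_hasseDeriv]
    rfl
  rw [h0, iteratedDeriv_eq_iterate, deriv_iter_eval, h1]
  simp [nsmul_eq_mul]

lemma Ncal_entry (q r μ ν : ℕ) (z : ℝ) (i : Fin μ) (a : Fin q) (j : Fin ν) (b : Fin r) :
    Ncal q r μ ν z (i, a) (j, b)
      = Polynomial.eval z
          (hasseDeriv (i : ℕ) (hasseDeriv (j : ℕ) (X ^ ((a : ℕ) + (b : ℕ)) : ℝ[X]))) := by
  have hc := hasse_comp' (i : ℕ) (j : ℕ) (X ^ ((a : ℕ) + (b : ℕ)) : ℝ[X])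
  have hfac : (((i : ℕ) + (j : ℕ)).factorial : ℝ)
      = (((i : ℕ) + (j : ℕ)).choose (i : ℕ) : ℝ) * (i : ℕ).factorial * (j : ℕ).factorial := by
    rw_mod_cast [← Nat.choose_mul_factorial_mul_factorial (Nat.le_add_right (i : ℕ) (j : ℕ))]
    rw [Nat.add_sub_cancel_left]
  show Md q r ((i : ℕ) + (j : ℕ)) z a b / ((i : ℕ).factorial * (j : ℕ).factorial) = _
  show iteratedDeriv ((i : ℕ) + (j : ℕ)) (fun t : ℝ => t ^ ((a : ℕ) + (b : ℕ))) z
      / ((i : ℕ).factorial * (j : ℕ).factorial) = _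
  rw [iteratedDeriv_pow_eq, hc, hfac]
  have hi := Nat.cast_ne_zero (R := ℝ) |>.2 (Nat.factorial_ne_zero (i : ℕ))
  have hj := Nat.cast_ne_zero (R := ℝ) |>.2 (Nat.factorial_ne_zero (j : ℕ))
  have hsm : Polynomial.eval z ((((i : ℕ) + (j : ℕ)).choose (i : ℕ))
      • hasseDeriv ((i : ℕ) + (j : ℕ)) (X ^ ((a : ℕ) + (b : ℕ)) : ℝ[X]))
      = (((i : ℕ) + (j : ℕ)).choose (i : ℕ) : ℝ)
        * Polynomial.eval z (hasseDeriv ((i : ℕ) + (j : ℕ)) (X ^ ((a : ℕ) + (b : ℕ)) : ℝ[X])) := by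
    simp [nsmul_eq_mul]
  rw [hsm]
  field_simp


lemma Ncal_mulVec_repr (q r μ ν : ℕ) (z : ℝ) (x : Fin ν × Fin r → ℝ) (i : Fin μ) (a : Fin q) :
    (Ncal q r μ ν z).mulVec x (i, a)
      = ∑ kl : Fin μ × Fin ν,
          (if (kl.1 : ℕ) ≤ (i : ℕ) then
            Polynomial.eval z (hasseDeriv ((i : ℕ) - (kl.1 : ℕ))
              (hasseDeriv (kl.2 : ℕ) (X ^ (a : ℕ) : ℝ[X])))
          else 0) * Polynomial.eval z (hasseDeriv (kl.1 : ℕ) (gd ν r x kl.2)) := by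
  have e1 : (Ncal q r μ ν z).mulVec x (i, a)
      = ∑ j : Fin ν, ∑ b : Fin r,
          Polynomial.eval z (hasseDeriv (i : ℕ)
            (hasseDeriv (j : ℕ) (X ^ ((a : ℕ) + (b : ℕ)) : ℝ[X]))) * x (j, b) := by
    rw [Matrix.mulVec, dotProduct, Fintype.sum_prod_type]
    exact Finset.sum_congr rfl fun j _ => Finset.sum_congr rfl fun b _ => by
      rw [Ncal_entry]
  have e2 : ∀ j : Fin ν, (∑ b : Fin r,
        Polynomial.eval z (hasseDeriv (i : ℕ)
          (hasseDeriv (j : ℕ) (X ^ ((a : ℕ) + (b : ℕ)) : ℝ[X]))) * x (j, b))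
      = Polynomial.eval z (hasseDeriv (i : ℕ)
          (hasseDeriv (j : ℕ) ((X ^ (a : ℕ) : ℝ[X]) * Pd ν r x j))) := by
    intro j
    have hP : (X ^ (a : ℕ) : ℝ[X]) * Pd ν r x j
        = ∑ b : Fin r, x (j, b) • (X ^ ((a : ℕ) + (b : ℕ)) : ℝ[X]) := by
      rw [Pd, Finset.mul_sum]
      exact Finset.sum_congr rfl fun b _ => by
        rw [pow_add, Polynomial.smul_eq_C_mul]; ring
    rw [hP, map_sum, map_sum, Polynomial.eval_finset_sum]
    exact Finset.sum_congr rfl fun b _ => by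
      rw [_root_.map_smul, _root_.map_smul, Polynomial.eval_smul, smul_eq_mul, mul_comm]
  have e3 : (∑ j : Fin ν, Polynomial.eval z (hasseDeriv (i : ℕ)
        (hasseDeriv (j : ℕ) ((X ^ (a : ℕ) : ℝ[X]) * Pd ν r x j))))
      = ∑ l : Fin ν, Polynomial.eval z (hasseDeriv (i : ℕ)
          (hasseDeriv (l : ℕ) (X ^ (a : ℕ) : ℝ[X]) * gtup ν (Pd ν r x) l)) := by
    rw [← Polynomial.eval_finset_sum, ← map_sum, key1 ν (a : ℕ) (Pd ν r x), map_sum,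
      Polynomial.eval_finset_sum]
  have e4 : ∀ l : Fin ν, Polynomial.eval z (hasseDeriv (i : ℕ)
        (hasseDeriv (l : ℕ) (X ^ (a : ℕ) : ℝ[X]) * gtup ν (Pd ν r x) l))
      = ∑ k : Fin μ, (if (k : ℕ) ≤ (i : ℕ) then
          Polynomial.eval z (hasseDeriv ((i : ℕ) - (k : ℕ))
            (hasseDeriv (l : ℕ) (X ^ (a : ℕ) : ℝ[X]))) else 0)
          * Polynomial.eval z (hasseDeriv (k : ℕ) (gtup ν (Pd ν r x) l)) := by
    intro l
    rw [hasseDeriv_mul, Finset.Nat.sum_antidiagonal_eq_sum_range_succ_mk,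
      Polynomial.eval_finset_sum, ← Finset.sum_range_reflect]
    have e5 : ∀ k ∈ Finset.range ((i : ℕ) + 1),
        Polynomial.eval z (hasseDeriv ((i : ℕ) + 1 - 1 - k)
            (hasseDeriv (l : ℕ) (X ^ (a : ℕ) : ℝ[X]))
          * hasseDeriv ((i : ℕ) - ((i : ℕ) + 1 - 1 - k)) (gtup ν (Pd ν r x) l))
        = Polynomial.eval z (hasseDeriv ((i : ℕ) - k)
            (hasseDeriv (l : ℕ) (X ^ (a : ℕ) : ℝ[X])))
          * Polynomial.eval z (hasseDeriv k (gtup ν (Pd ν r x) l)) := by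
      intro k hk
      rw [Finset.mem_range] at hk
      have h1 : (i : ℕ) + 1 - 1 - k = (i : ℕ) - k := by omega
      have h2 : (i : ℕ) - ((i : ℕ) - k) = k := by omega
      rw [h1, h2, Polynomial.eval_mul]
    rw [Finset.sum_congr rfl e5, range_to_fin_sum μ i]
    exact Finset.sum_congr rfl fun k _ => by rw [ite_mul, zero_mul]
  rw [e1, Finset.sum_congr rfl fun j _ => e2 j, e3, Finset.sum_congr rfl fun l _ => e4 l,
    Finset.sum_comm, Fintype.sum_prod_type]
  rfl


lemma eval_hh (z : ℝ) (l' m : ℕ) :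
    Polynomial.eval z (hasseDeriv l' (X ^ m : ℝ[X])) = (m.choose l' : ℝ) * z ^ (m - l') := by
  rw [X_pow_eq_monomial, hasseDeriv_monomial, eval_monomial, mul_one]

lemma Xent_inj (q μ ν : ℕ) (z : ℝ) (hνq : ν ≤ q) (v : Fin μ × Fin ν → ℝ)
    (hv : ∀ (i : Fin μ) (a : Fin q),
      (∑ kl : Fin μ × Fin ν, (if (kl.1 : ℕ) ≤ (i : ℕ) then
        Polynomial.eval z (hasseDeriv ((i : ℕ) - (kl.1 : ℕ))
          (hasseDeriv (kl.2 : ℕ) (X ^ (a : ℕ) : ℝ[X])))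
        else 0) * v kl) = 0) :
    v = 0 := by
  suffices h : ∀ n (k : Fin μ) (l : Fin ν), (k : ℕ) * ν + (l : ℕ) ≤ n → v (k, l) = 0 by
    funext kl
    exact h ((kl.1 : ℕ) * ν + (kl.2 : ℕ)) kl.1 kl.2 le_rfl
  intro n
  induction n using Nat.strong_induction_on with
  | _ n ih =>
  intro k l hn
  have hlq : (l : ℕ) < q := lt_of_lt_of_le l.isLt hνq
  have hrow := hv k ⟨(l : ℕ), hlq⟩
  rw [Finset.sum_eq_single (k, l)] at hrow
  · rw [if_pos le_rfl, Nat.sub_self] at hrow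
    simp only [hasseDeriv_zero, LinearMap.id_apply] at hrow
    rw [eval_hh] at hrow
    simpa using hrow
  · rintro ⟨k', l'⟩ _ hne
    by_cases hk : (k' : ℕ) ≤ (k : ℕ)
    · rcases lt_or_eq_of_le hk with hlt | heq
      · have hlow : (k' : ℕ) * ν + (l' : ℕ) < n := by
          have h1 : (k' : ℕ) * ν + (l' : ℕ) < ((k' : ℕ) + 1) * ν := by
            rw [Nat.add_one_mul]
            exact Nat.add_lt_add_left l'.isLt _
          have h2 : ((k' : ℕ) + 1) * ν ≤ (k : ℕ) * ν := Nat.mul_le_mul_right _ hlt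
          exact lt_of_lt_of_le (lt_of_lt_of_le h1 h2) (le_trans (Nat.le_add_right _ _) hn)
        rw [ih _ hlow k' l' le_rfl, mul_zero]
      · have hlne : (l' : ℕ) ≠ (l : ℕ) := by
          intro hc
          exact hne (by rw [Prod.mk.injEq]; exact ⟨Fin.ext heq, Fin.ext hc⟩)
        rcases Nat.lt_or_ge (l' : ℕ) (l : ℕ) with hllt | hlge
        · have hlow : (k' : ℕ) * ν + (l' : ℕ) < n := by
            have : (k' : ℕ) * ν + (l' : ℕ) < (k : ℕ) * ν + (l : ℕ) := by
              rw [heq]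
              exact Nat.add_lt_add_left hllt _
            exact lt_of_lt_of_le this hn
          rw [ih _ hlow k' l' le_rfl, mul_zero]
        · have hlt' : (l : ℕ) < (l' : ℕ) := lt_of_le_of_ne hlge (Ne.symm hlne)
          rw [if_pos hk, show (k : ℕ) - (k' : ℕ) = 0 by omega]
          simp only [hasseDeriv_zero, LinearMap.id_apply]
          rw [eval_hh, Nat.choose_eq_zero_of_lt hlt']
          simp
    · rw [if_neg hk, zero_mul]
  · intro hmem
    exact absurd (Finset.mem_univ _) hmem

lemma ker_iff (q r μ ν : ℕ) (z : ℝ) (hνq : ν ≤ q) (x : Fin ν × Fin r → ℝ) :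
    (Ncal q r μ ν z).mulVec x = 0 ↔
      ∀ (k : Fin μ) (l : Fin ν), Polynomial.eval z (hasseDeriv (k : ℕ) (gd ν r x l)) = 0 := by
  constructor
  · intro h k l
    have hz := Xent_inj q μ ν z hνq
      (fun kl => Polynomial.eval z (hasseDeriv (kl.1 : ℕ) (gd ν r x kl.2)))
      (fun i a => by rw [← Ncal_mulVec_repr]; exact congrFun h (i, a))
    exact congrFun hz (k, l)
  · intro h
    funext p
    obtain ⟨i, a⟩ := p
    show (Ncal q r μ ν z).mulVec x (i, a) = 0
    rw [Ncal_mulVec_repr]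
    exact Finset.sum_eq_zero fun kl _ => by rw [h kl.1 kl.2, mul_zero]


lemma Pd_all_zero (y : Fin ν × Fin d → ℝ) (h : ∀ j, Pd ν d y j = 0) : y = 0 := by
  funext p
  obtain ⟨j, b⟩ := p
  have hc := congrArg (fun q : ℝ[X] => q.coeff (b : ℕ)) (h j)
  simpa [Pd_coeff, b.isLt] using hc

lemma gtup_zero_imp {ν : ℕ} (p : Fin ν → ℝ[X]) (h : ∀ l, gtup ν p l = 0) :
    ∀ l, p l = 0 := by
  have claim : ∀ m (l : Fin ν), ν - m ≤ (l : ℕ) → p l = 0 := by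
    intro m
    induction m with
    | zero => intro l hl; exact absurd l.isLt (by omega)
    | succ m ih =>
      intro l hl
      have hg := h l
      rw [gtup, Finset.sum_eq_single l] at hg
      · rw [if_pos le_rfl, Nat.sub_self, hasseDeriv_zero, LinearMap.id_apply] at hg
        exact hg
      · intro j _ hj
        by_cases hle : (l : ℕ) ≤ (j : ℕ)
        · have hjl : (l : ℕ) < (j : ℕ) :=
            lt_of_le_of_ne hle fun hc => hj (Fin.ext hc.symm)
          rw [if_pos hle, ih j (by omega), map_zero]
        · rw [if_neg hle]
      · intro hmem
        exact absurd (Finset.mem_univ _) hmem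
  intro l
  exact claim ν l (by omega)

lemma gd_zero_imp (y : Fin ν × Fin d → ℝ) (h : ∀ l, gd ν d y l = 0) : y = 0 :=
  Pd_all_zero y (gtup_zero_imp _ h)

lemma gd_taylor_zero (z : ℝ) (y : Fin ν × Fin d → ℝ)
    (h : ∀ l : Fin ν, ∀ m < d, (taylor z (gd ν d y l)).coeff m = 0) : y = 0 := by
  apply gd_zero_imp
  intro l
  have ht : taylor z (gd ν d y l) = 0 := by
    by_cases hg0 : gd ν d y l = 0
    · rw [hg0, map_zero]
    · have hdeg : (gd ν d y l).natDegree < d := by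
        by_contra hge
        exact (Polynomial.leadingCoeff_ne_zero.mpr hg0)
          (gd_coeff_zero y l _ (by omega))
      have hdeg' : (taylor z (gd ν d y l)).natDegree < d := by
        rw [natDegree_taylor]; exact hdeg
      ext m
      by_cases hm : m < d
      · rw [h l m hm, coeff_zero]
      · rw [coeff_eq_zero_of_natDegree_lt (lt_of_lt_of_le hdeg' (le_of_not_gt hm)), coeff_zero]
  exact taylor_injective z (by rw [ht, map_zero])


lemma hasse_XC_mul (z : ℝ) (m : ℕ) (f : ℝ[X]) :
    hasseDeriv (m + 1) ((X - C z) * f)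
      = (X - C z) * hasseDeriv (m + 1) f + hasseDeriv m f := by
  rw [hasseDeriv_mul, Finset.Nat.sum_antidiagonal_eq_sum_range_succ_mk,
    Finset.sum_range_succ', Finset.sum_range_succ']
  have h0 : ∀ k ∈ Finset.range m,
      hasseDeriv (k + 1 + 1) ((X : ℝ[X]) - C z)
        * hasseDeriv (m + 1 - (k + 1 + 1)) f = 0 := by
    intro k _
    rw [map_sub, hasseDeriv_X _ (by omega), hasseDeriv_C _ _ (by omega), sub_zero, zero_mul]
  rw [Finset.sum_eq_zero h0, zero_add]
  have h1 : hasseDeriv (0 + 1) ((X : ℝ[X]) - C z) = 1 := by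
    rw [map_sub]
    rw [hasseDeriv_one]
    simp
  have h2 : hasseDeriv 0 ((X : ℝ[X]) - C z) = X - C z := by
    rw [hasseDeriv_zero, LinearMap.id_apply]
  rw [h1, h2, one_mul]
  have h3 : m + 1 - (0 + 1) = m := by omega
  have h4 : m + 1 - 0 = m + 1 := by omega
  rw [h3, h4]
  ring

lemma gtup_T (ν : ℕ) (z : ℝ) (p : Fin ν → ℝ[X]) (l : Fin ν) :
    gtup ν (fun j => (X - C z) * p j
        - ∑ j' : Fin ν, if (j : ℕ) + 1 = (j' : ℕ) then p j' else 0) l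
      = (X - C z) * gtup ν p l := by
  have hper : ∀ j : Fin ν,
      (if (l : ℕ) ≤ (j : ℕ) then hasseDeriv ((j : ℕ) - (l : ℕ)) ((X - C z) * p j) else 0)
        = (if (l : ℕ) ≤ (j : ℕ) then (X - C z) * hasseDeriv ((j : ℕ) - (l : ℕ)) (p j) else 0)
          + (if (l : ℕ) + 1 ≤ (j : ℕ) then
              hasseDeriv ((j : ℕ) - ((l : ℕ) + 1)) (p j) else 0) := by
    intro j
    by_cases hle : (l : ℕ) ≤ (j : ℕ)
    · by_cases hlt : (l : ℕ) + 1 ≤ (j : ℕ)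
      · obtain ⟨m, hm⟩ : ∃ m, (j : ℕ) - (l : ℕ) = m + 1 := ⟨(j : ℕ) - ((l : ℕ) + 1), by omega⟩
        rw [if_pos hle, if_pos hle, if_pos hlt, hm, hasse_XC_mul,
          show (j : ℕ) - ((l : ℕ) + 1) = m from by omega]
      · have hjl : (j : ℕ) = (l : ℕ) := by omega
        rw [if_pos hle, if_pos hle, if_neg hlt, hjl, Nat.sub_self, hasseDeriv_zero,
          LinearMap.id_apply, LinearMap.id_apply, add_zero]
    · rw [if_neg hle, if_neg hle, if_neg (by omega), add_zero]
  have hS2 : (∑ j : Fin ν, if (l : ℕ) ≤ (j : ℕ) then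
        hasseDeriv ((j : ℕ) - (l : ℕ))
          (∑ j' : Fin ν, if (j : ℕ) + 1 = (j' : ℕ) then p j' else 0) else 0)
      = ∑ j' : Fin ν, if (l : ℕ) + 1 ≤ (j' : ℕ) then
          hasseDeriv ((j' : ℕ) - ((l : ℕ) + 1)) (p j') else 0 := by
    have hin : ∀ j : Fin ν, (if (l : ℕ) ≤ (j : ℕ) then
        hasseDeriv ((j : ℕ) - (l : ℕ))
          (∑ j' : Fin ν, if (j : ℕ) + 1 = (j' : ℕ) then p j' else 0) else 0)
        = ∑ j' : Fin ν, (if (l : ℕ) ≤ (j : ℕ) ∧ (j : ℕ) + 1 = (j' : ℕ) then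
            hasseDeriv ((j : ℕ) - (l : ℕ)) (p j') else 0) := by
      intro j
      by_cases hle : (l : ℕ) ≤ (j : ℕ)
      · rw [if_pos hle, map_sum]
        refine Finset.sum_congr rfl fun j' _ => ?_
        by_cases hc : (j : ℕ) + 1 = (j' : ℕ)
        · rw [if_pos hc, if_pos ⟨hle, hc⟩]
        · rw [if_neg hc, if_neg (by tauto), map_zero]
      · rw [if_neg hle, Finset.sum_eq_zero fun j' _ => if_neg (by tauto)]
    rw [Finset.sum_congr rfl fun j _ => hin j, Finset.sum_comm]
    refine Finset.sum_congr rfl fun j' _ => ?_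
    by_cases hc : (l : ℕ) + 1 ≤ (j' : ℕ)
    · rw [if_pos hc, Finset.sum_eq_single (⟨(j' : ℕ) - 1, by omega⟩ : Fin ν)]
      · rw [if_pos (show (l : ℕ) ≤ ((⟨(j' : ℕ) - 1, by omega⟩ : Fin ν) : ℕ)
            ∧ ((⟨(j' : ℕ) - 1, by omega⟩ : Fin ν) : ℕ) + 1 = (j' : ℕ) from
            ⟨show (l : ℕ) ≤ (j' : ℕ) - 1 from by omega,
             show (j' : ℕ) - 1 + 1 = (j' : ℕ) from by omega⟩)]
        have harg : ((⟨(j' : ℕ) - 1, by omega⟩ : Fin ν) : ℕ) - (l : ℕ)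
            = (j' : ℕ) - ((l : ℕ) + 1) := by
          show (j' : ℕ) - 1 - (l : ℕ) = (j' : ℕ) - ((l : ℕ) + 1)
          omega
        rw [harg]
      · intro j _ hj
        rw [if_neg]
        rintro ⟨h1, h2⟩
        exact hj (Fin.ext (show (j : ℕ) = (j' : ℕ) - 1 from by omega))
      · intro hmem
        exact absurd (Finset.mem_univ _) hmem
    · rw [if_neg hc, Finset.sum_eq_zero]
      intro j _
      rw [if_neg]
      rintro ⟨h1, h2⟩
      omega
  rw [gtup]
  simp only [map_sub]
  have hsplit : ∀ j : Fin ν, (if (l : ℕ) ≤ (j : ℕ) then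
      hasseDeriv ((j : ℕ) - (l : ℕ)) ((X - C z) * p j)
        - hasseDeriv ((j : ℕ) - (l : ℕ))
            (∑ j' : Fin ν, if (j : ℕ) + 1 = (j' : ℕ) then p j' else 0) else 0)
      = (if (l : ℕ) ≤ (j : ℕ) then hasseDeriv ((j : ℕ) - (l : ℕ)) ((X - C z) * p j) else 0)
        - (if (l : ℕ) ≤ (j : ℕ) then hasseDeriv ((j : ℕ) - (l : ℕ))
            (∑ j' : Fin ν, if (j : ℕ) + 1 = (j' : ℕ) then p j' else 0) else 0) := by
    intro j
    split <;> simp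
  rw [Finset.sum_congr rfl fun j _ => hsplit j, Finset.sum_sub_distrib,
    Finset.sum_congr rfl fun j _ => hper j, Finset.sum_add_distrib, hS2, add_sub_cancel_right,
    gtup, Finset.mul_sum]
  refine Finset.sum_congr rfl fun j _ => ?_
  split <;> simp


lemma Kk_mulVec_apply (ν r k : ℕ) (z : ℝ) (y : Fin ν × Fin (r - (k + 1)) → ℝ)
    (j : Fin ν) (a : Fin (r - k)) :
    (Kk ν r k z).mulVec y (j, a)
      = (∑ b : Fin (r - (k + 1)), Fmk r k z a b * y (j, b))
        + ∑ j' : Fin ν, (if (j : ℕ) + 1 = (j' : ℕ) then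
            ∑ b : Fin (r - (k + 1)), Fmk' r k a b * y (j', b) else 0) := by
  rw [Matrix.mulVec, dotProduct, Fintype.sum_prod_type]
  have hterm : ∀ (j' : Fin ν) (b : Fin (r - (k + 1))),
      Kk ν r k z (j, a) (j', b) * y (j', b)
        = (if j = j' then Fmk r k z a b * y (j', b) else 0)
          + (if (j : ℕ) + 1 = (j' : ℕ) then Fmk' r k a b * y (j', b) else 0) := by
    intro j' b
    rw [Kk, Matrix.add_apply, Matrix.kroneckerMap_apply, Matrix.kroneckerMap_apply,
      Matrix.one_apply]
    show ((if j = j' then (1 : ℝ) else 0) * Fmk r k z a b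
        + (if (j : ℕ) + 1 = (j' : ℕ) then (1 : ℝ) else 0) * Fmk' r k a b) * y (j', b) = _
    by_cases h1 : j = j' <;> by_cases h2 : (j : ℕ) + 1 = (j' : ℕ) <;>
      simp [h1, h2] <;> ring
  have h1 : ∀ j' : Fin ν, (∑ b, if j = j' then Fmk r k z a b * y (j', b) else 0)
      = if j = j' then ∑ b, Fmk r k z a b * y (j', b) else 0 := by
    intro j'; split <;> simp
  have h2 : ∀ j' : Fin ν,
      (∑ b, if (j : ℕ) + 1 = (j' : ℕ) then Fmk' r k a b * y (j', b) else 0)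
      = if (j : ℕ) + 1 = (j' : ℕ) then ∑ b, Fmk' r k a b * y (j', b) else 0 := by
    intro j'; split <;> simp
  rw [Finset.sum_congr rfl fun j' _ => by
    rw [Finset.sum_congr rfl fun b _ => hterm j' b, Finset.sum_add_distrib, h1 j', h2 j']]
  rw [Finset.sum_add_distrib, Finset.sum_ite_eq Finset.univ j
    (fun j' => ∑ b, Fmk r k z a b * y (j', b)), if_pos (Finset.mem_univ j)]

lemma Fmk'_sum (r k : ℕ) (c : Fin (r - (k + 1)) → ℝ) (a : Fin (r - k)) :
    (∑ b : Fin (r - (k + 1)), Fmk' r k a b * c b)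
      = if h : (a : ℕ) < r - (k + 1) then -c ⟨(a : ℕ), h⟩ else 0 := by
  have hb : ∀ b : Fin (r - (k + 1)), Fmk' r k a b * c b
      = if (a : ℕ) = (b : ℕ) then -c b else 0 := by
    intro b
    show (if (a : ℕ) = (b : ℕ) then (-1 : ℝ) else 0) * c b = _
    split <;> ring
  rw [Finset.sum_congr rfl fun b _ => hb b, fin_sum_natcollapse]

lemma Fmk_sum (r k : ℕ) (z : ℝ) (c : Fin (r - (k + 1)) → ℝ) (a : Fin (r - k)) :
    (∑ b : Fin (r - (k + 1)), Fmk r k z a b * c b)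
      = (if h : (a : ℕ) < r - (k + 1) then -z * c ⟨(a : ℕ), h⟩ else 0)
        + (if h : 1 ≤ (a : ℕ) ∧ (a : ℕ) - 1 < r - (k + 1) then c ⟨(a : ℕ) - 1, h.2⟩ else 0) := by
  have hsp : ∀ b : Fin (r - (k + 1)), Fmk r k z a b * c b
      = (if (a : ℕ) = (b : ℕ) then -z * c b else 0)
        + (if (a : ℕ) = (b : ℕ) + 1 then c b else 0) := by
    intro b
    show (if (a : ℕ) = (b : ℕ) then -z else if (a : ℕ) = (b : ℕ) + 1 then (1 : ℝ) else 0)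
        * c b = _
    by_cases hA : (a : ℕ) = (b : ℕ)
    · rw [if_pos hA, if_pos hA, if_neg (by omega), add_zero]
    · rw [if_neg hA, if_neg hA, zero_add]
      split <;> ring
  rw [Finset.sum_congr rfl fun b _ => hsp b, Finset.sum_add_distrib, fin_sum_natcollapse]
  congr 1
  have hconv : ∀ b : Fin (r - (k + 1)), (if (a : ℕ) = (b : ℕ) + 1 then c b else 0)
      = if 1 ≤ (a : ℕ) then (if (a : ℕ) - 1 = (b : ℕ) then c b else 0) else 0 := by
    intro b
    by_cases h1 : 1 ≤ (a : ℕ)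
    · rw [if_pos h1]
      exact if_congr (by omega) rfl rfl
    · rw [if_neg h1, if_neg (by omega)]
  rw [Finset.sum_congr rfl fun b _ => hconv b]
  by_cases h1 : 1 ≤ (a : ℕ)
  · simp only [if_pos h1]
    rw [fin_sum_natcollapse]
    by_cases h2 : (a : ℕ) - 1 < r - (k + 1)
    · rw [dif_pos h2, dif_pos ⟨h1, h2⟩]
    · rw [dif_neg h2, dif_neg (by tauto)]
  · simp only [if_neg h1]
    rw [Finset.sum_const_zero, dif_neg (by tauto)]



lemma Pd_Kk (ν r k : ℕ) (z : ℝ) (y : Fin ν × Fin (r - (k + 1)) → ℝ) (j : Fin ν) :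
    Pd ν (r - k) ((Kk ν r k z).mulVec y) j
      = (X - C z) * Pd ν (r - (k + 1)) y j
        - ∑ j' : Fin ν, (if (j : ℕ) + 1 = (j' : ℕ) then Pd ν (r - (k + 1)) y j' else 0) := by
  ext m
  rw [coeff_sub, sub_mul, coeff_sub, coeff_C_mul, finset_sum_coeff]
  have hXP : ((X : ℝ[X]) * Pd ν (r - (k + 1)) y j).coeff m
      = if 1 ≤ m then (Pd ν (r - (k + 1)) y j).coeff (m - 1) else 0 := by
    cases m with
    | zero => simp [Polynomial.mul_coeff_zero, Polynomial.coeff_X_zero]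
    | succ m' =>
      rw [coeff_X_mul, if_pos (by omega)]
      simp
  have hsum : ∀ j' : Fin ν,
      (if (j : ℕ) + 1 = (j' : ℕ) then Pd ν (r - (k + 1)) y j' else 0).coeff m
        = if (j : ℕ) + 1 = (j' : ℕ) then
            (if h : m < r - (k + 1) then y (j', ⟨m, h⟩) else 0) else 0 := by
    intro j'
    rw [apply_ite (fun p : ℝ[X] => p.coeff m), coeff_zero]
    simp only [Pd_coeff]
  rw [hXP, Finset.sum_congr rfl fun j' _ => hsum j']
  simp only [Pd_coeff]
  by_cases hm : m < r - k
  · rw [dif_pos hm, Kk_mulVec_apply]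
    simp only [Fmk_sum, Fmk'_sum, Fin.val_mk]
    have hneg : ∀ j' : Fin ν, (if (j : ℕ) + 1 = (j' : ℕ) then
        (if h : m < r - (k + 1) then -y (j', ⟨m, h⟩) else 0) else 0)
        = -(if (j : ℕ) + 1 = (j' : ℕ) then
            (if h : m < r - (k + 1) then y (j', ⟨m, h⟩) else 0) else 0) := by
      intro j'
      split
      · split <;> simp
      · simp
    rw [Finset.sum_congr rfl fun j' _ => hneg j', Finset.sum_neg_distrib]
    set S := ∑ j' : Fin ν, (if (j : ℕ) + 1 = (j' : ℕ) then
      (if h : m < r - (k + 1) then y (j', ⟨m, h⟩) else 0) else 0) with hS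
    split_ifs <;> first | omega | ring | (exfalso; omega)
  · rw [dif_neg hm]
    have hz1 : ¬ m < r - (k + 1) := by omega
    have hz2 : ¬ (1 ≤ m ∧ m - 1 < r - (k + 1)) := by omega
    rw [Finset.sum_eq_zero fun j' _ => by
      rw [dif_neg hz1]
      split <;> rfl]
    rw [dif_neg hz1]
    by_cases h1 : 1 ≤ m
    · rw [if_pos h1, dif_neg (by omega)]
      ring
    · rw [if_neg h1]
      ring


lemma Kk_ker (ν r k : ℕ) (z : ℝ) (y : Fin ν × Fin (r - (k + 1)) → ℝ)
    (h : (Kk ν r k z).mulVec y = 0) : y = 0 := by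
  have hP : ∀ j, Pd ν (r - k) ((Kk ν r k z).mulVec y) j = 0 := by
    intro j
    rw [h]
    simp [Pd]
  have hstep : ∀ j : Fin ν, (X - C z) * Pd ν (r - (k + 1)) y j
      = ∑ j' : Fin ν, (if (j : ℕ) + 1 = (j' : ℕ) then Pd ν (r - (k + 1)) y j' else 0) := by
    intro j
    have h2 := Pd_Kk ν r k z y j
    rw [hP j] at h2
    exact sub_eq_zero.mp h2.symm
  have claim : ∀ m (j : Fin ν), ν - m ≤ (j : ℕ) → Pd ν (r - (k + 1)) y j = 0 := by
    intro m
    induction m with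
    | zero => intro j hj; exact absurd j.isLt (by omega)
    | succ m ih =>
      intro j hj
      have h2 := hstep j
      rw [Finset.sum_eq_zero (fun j' _ => by
        by_cases hc : (j : ℕ) + 1 = (j' : ℕ)
        · rw [if_pos hc, ih j' (by omega)]
        · rw [if_neg hc])] at h2
      rcases mul_eq_zero.mp h2 with h3 | h3
      · exact absurd h3 (Polynomial.X_sub_C_ne_zero z)
      · exact h3
  exact Pd_all_zero y fun j => claim ν j (by omega)

lemma Kk_inj (ν r k : ℕ) (z : ℝ) : Function.Injective ((Kk ν r k z).mulVec) := by
  intro y1 y2 h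
  have h0 : (Kk ν r k z).mulVec (y1 - y2) = 0 := by
    rw [Matrix.mulVec_sub, h, sub_self]
  have := Kk_ker ν r k z (y1 - y2) h0
  exact sub_eq_zero.mp this

lemma gd_Kk (ν r k : ℕ) (z : ℝ) (y : Fin ν × Fin (r - (k + 1)) → ℝ) (l : Fin ν) :
    gd ν (r - k) ((Kk ν r k z).mulVec y) l = (X - C z) * gd ν (r - (k + 1)) y l := by
  rw [gd, gd]
  have hPd : Pd ν (r - k) ((Kk ν r k z).mulVec y)
      = fun j => (X - C z) * Pd ν (r - (k + 1)) y j
          - ∑ j' : Fin ν, (if (j : ℕ) + 1 = (j' : ℕ) then Pd ν (r - (k + 1)) y j' else 0) :=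
    funext (Pd_Kk ν r k z y)
  rw [hPd]
  exact gtup_T ν z (Pd ν (r - (k + 1)) y) l

lemma KP_zero_mulVec (ν r : ℕ) (z : ℝ) (x : Fin ν × Fin (r - 0) → ℝ) (p : Fin ν × Fin r) :
    (KP ν r z 0).mulVec x p = x (p.1, ⟨(p.2 : ℕ), by omega⟩) := by
  rw [KP, Matrix.mulVec, dotProduct]
  rw [Finset.sum_eq_single ((p.1, ⟨(p.2 : ℕ), by omega⟩) : Fin ν × Fin (r - 0))]
  · rw [Matrix.of_apply, if_pos ⟨rfl, rfl⟩, one_mul]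
  · intro q _ hq
    rw [Matrix.of_apply, if_neg, zero_mul]
    rintro ⟨h1, h2⟩
    exact hq (Prod.ext h1.symm (Fin.ext h2.symm))
  · intro hmem
    exact absurd (Finset.mem_univ _) hmem

lemma Pd_KP_zero (ν r : ℕ) (z : ℝ) (x : Fin ν × Fin (r - 0) → ℝ) :
    Pd ν r ((KP ν r z 0).mulVec x) = Pd ν (r - 0) x := by
  funext j
  rw [Pd, Pd]
  refine Finset.sum_congr rfl fun b _ => ?_
  rw [KP_zero_mulVec]
  rfl

lemma gd_KP (ν r : ℕ) (z : ℝ) :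
    ∀ (m : ℕ) (x : Fin ν × Fin (r - m) → ℝ) (l : Fin ν),
      gd ν r ((KP ν r z m).mulVec x) l = (X - C z) ^ m * gd ν (r - m) x l := by
  intro m
  induction m with
  | zero =>
    intro x l
    rw [pow_zero, one_mul, gd, gd, Pd_KP_zero]
  | succ m ih =>
    intro x l
    rw [KP, ← Matrix.mulVec_mulVec, ih ((Kk ν r m z).mulVec x) l, gd_Kk, pow_succ]
    ring

lemma KP_inj (ν r : ℕ) (z : ℝ) : ∀ m, Function.Injective ((KP ν r z m).mulVec) := by
  intro m
  induction m with
  | zero =>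
    intro x1 x2 h
    funext p
    obtain ⟨j, b⟩ := p
    have hb : (b : ℕ) < r := by
      have := b.isLt
      omega
    have h1 := congrFun h (j, (⟨(b : ℕ), hb⟩ : Fin r))
    rw [KP_zero_mulVec, KP_zero_mulVec] at h1
    exact h1
  | succ m ih =>
    intro x1 x2 h
    rw [KP, ← Matrix.mulVec_mulVec, ← Matrix.mulVec_mulVec] at h
    exact Kk_inj ν r m z (ih h)

lemma eval_hasse_pow_mul (z : ℝ) (n k : ℕ) (hk : k < n) (h : ℝ[X]) :
    Polynomial.eval z (hasseDeriv k ((X - C z) ^ n * h)) = 0 := by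
  rw [← taylor_coeff, taylor_apply, mul_comp, pow_comp, sub_comp, X_comp, C_comp,
    add_sub_cancel_right, mul_comm, Polynomial.coeff_mul_X_pow', if_neg (by omega)]


lemma gd_add (x y : Fin ν × Fin d → ℝ) (l : Fin ν) :
    gd ν d (x + y) l = gd ν d x l + gd ν d y l := by
  rw [gd, gd, gd, gtup, gtup, gtup, ← Finset.sum_add_distrib]
  refine Finset.sum_congr rfl fun j _ => ?_
  have hP : Pd ν d (x + y) j = Pd ν d x j + Pd ν d y j := by
    rw [Pd, Pd, Pd, ← Finset.sum_add_distrib]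
    refine Finset.sum_congr rfl fun b _ => ?_
    rw [Pi.add_apply, C_add, add_mul]
  rw [hP]
  split
  · rw [map_add]
  · simp

lemma gd_smul (c : ℝ) (x : Fin ν × Fin d → ℝ) (l : Fin ν) :
    gd ν d (c • x) l = c • gd ν d x l := by
  rw [gd, gd, gtup, gtup, Finset.smul_sum]
  refine Finset.sum_congr rfl fun j _ => ?_
  have hP : Pd ν d (c • x) j = c • Pd ν d x j := by
    rw [Pd, Pd, Finset.smul_sum]
    refine Finset.sum_congr rfl fun b _ => ?_
    rw [Pi.smul_apply, smul_eq_mul, C_mul, Polynomial.smul_eq_C_mul, mul_assoc]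
  rw [hP]
  split
  · rw [_root_.map_smul]
  · simp

def rho (ν r μ : ℕ) (z : ℝ) : (Fin ν × Fin r → ℝ) →ₗ[ℝ] (Fin ν × Fin (r - μ) → ℝ) where
  toFun x := fun p => (taylor z (gd ν r x p.1)).coeff (μ + (p.2 : ℕ))
  map_add' x y := by
    funext p
    simp only [gd_add, map_add, Polynomial.coeff_add, Pi.add_apply]
  map_smul' c x := by
    funext p
    simp only [gd_smul, _root_.map_smul, Polynomial.coeff_smul, Pi.smul_apply, smul_eq_mul,
      RingHom.id_apply]

end
end St14

open Polynomial in
theorem statement14 (q r μ ν : ℕ) (hq : 0 < q) (hr : 0 < r) (hμ : 0 < μ) (hν : 0 < ν)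
    (hνq : ν ≤ q) :
    ∀ z : ℝ,
      (μ ≤ r - 1 →
        LinearMap.range (KP ν r z μ).mulVecLin = LinearMap.ker (Ncal q r μ ν z).mulVecLin ∧
        Module.finrank ℝ (LinearMap.ker (Ncal q r μ ν z).mulVecLin) = ν * (r - μ)) ∧
      (r ≤ μ → LinearMap.ker (Ncal q r μ ν z).mulVecLin = ⊥) ∧
      (Ncal q r μ ν z).rank = ν * min μ r ∧
      (Function.Injective (Ncal q r μ ν z).mulVecLin ↔ r ≤ μ) := by
  intro z
  have hker_mem : ∀ x, x ∈ LinearMap.ker (Ncal q r μ ν z).mulVecLin ↔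
      (Ncal q r μ ν z).mulVec x = 0 := fun x => by
    rw [LinearMap.mem_ker, Matrix.mulVecLin_apply]
  have hchar : ∀ x : Fin ν × Fin r → ℝ,
      (Ncal q r μ ν z).mulVec x = 0 ↔
        ∀ (k : Fin μ) (l : Fin ν), (taylor z (St14.gd ν r x l)).coeff (k : ℕ) = 0 := by
    intro x
    have h := St14.ker_iff q r μ ν z hνq x
    simp only [Polynomial.taylor_coeff]
    exact h
  -- Part B : r ≤ μ → ker = ⊥
  have hbot : r ≤ μ → LinearMap.ker (Ncal q r μ ν z).mulVecLin = ⊥ := by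
    intro hrμ
    rw [Submodule.eq_bot_iff]
    intro x hx
    apply St14.gd_taylor_zero z x
    intro l m hm
    exact (hchar x).mp ((hker_mem x).mp hx) ⟨m, by omega⟩ l
  -- Part A : μ ≤ r - 1
  have hA : μ ≤ r - 1 →
      LinearMap.range (KP ν r z μ).mulVecLin
          = LinearMap.ker (Ncal q r μ ν z).mulVecLin ∧
        Module.finrank ℝ (LinearMap.ker (Ncal q r μ ν z).mulVecLin) = ν * (r - μ) := by
    intro hμr
    have hμltr : μ < r := by omega
    have hle : LinearMap.range (KP ν r z μ).mulVecLin
        ≤ LinearMap.ker (Ncal q r μ ν z).mulVecLin := by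
      rintro _ ⟨y, rfl⟩
      rw [LinearMap.mem_ker, Matrix.mulVecLin_apply, Matrix.mulVecLin_apply]
      apply (hchar _).mpr
      intro k l
      rw [Polynomial.taylor_coeff, St14.gd_KP ν r z μ y l]
      exact St14.eval_hasse_pow_mul z μ (k : ℕ) k.isLt _
    have hKPinj : Function.Injective (KP ν r z μ).mulVecLin := by
      have hco : ⇑(KP ν r z μ).mulVecLin = (KP ν r z μ).mulVec :=
        funext fun v => Matrix.mulVecLin_apply _ _
      rw [hco]
      exact St14.KP_inj ν r z μ
    have hrange : Module.finrank ℝ (LinearMap.range (KP ν r z μ).mulVecLin)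
        = ν * (r - μ) := by
      rw [LinearMap.finrank_range_of_inj hKPinj, Module.finrank_fintype_fun_eq_card]
      simp
    have hinj2 : Function.Injective
        ((St14.rho ν r μ z).domRestrict (LinearMap.ker (Ncal q r μ ν z).mulVecLin)) := by
      rw [injective_iff_map_eq_zero]
      rintro ⟨x, hx⟩ hfx
      have hx0 : x = 0 := by
        apply St14.gd_taylor_zero z x
        intro l m hm
        by_cases hmμ : m < μ
        · exact (hchar x).mp ((hker_mem x).mp hx) ⟨m, hmμ⟩ l
        · have hm2 : m - μ < r - μ := by omega
          rw [LinearMap.domRestrict_apply] at hfx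
          have h3 := congrFun hfx (l, (⟨m - μ, hm2⟩ : Fin (r - μ)))
          have h4 : (taylor z (St14.gd ν r x l)).coeff (μ + (m - μ)) = 0 := h3
          rwa [show μ + (m - μ) = m from by omega] at h4
      exact Subtype.ext hx0
    have hkerle : Module.finrank ℝ (LinearMap.ker (Ncal q r μ ν z).mulVecLin)
        ≤ ν * (r - μ) := by
      have h4 := LinearMap.finrank_le_finrank_of_injective hinj2
      rwa [Module.finrank_fintype_fun_eq_card, Fintype.card_prod, Fintype.card_fin,
        Fintype.card_fin] at h4
    have heq : LinearMap.range (KP ν r z μ).mulVecLin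
        = LinearMap.ker (Ncal q r μ ν z).mulVecLin :=
      Submodule.eq_of_le_of_finrank_le hle (by rw [hrange]; exact hkerle)
    exact ⟨heq, by rw [← heq, hrange]⟩
  refine ⟨hA, hbot, ?_, ?_⟩
  · -- rank
    have hrn := LinearMap.finrank_range_add_finrank_ker (Ncal q r μ ν z).mulVecLin
    rw [Module.finrank_fintype_fun_eq_card, Fintype.card_prod, Fintype.card_fin,
      Fintype.card_fin] at hrn
    by_cases hcase : r ≤ μ
    · rw [hbot hcase] at hrn
      rw [Matrix.rank]
      rw [finrank_bot ℝ (Fin ν × Fin r → ℝ)] at hrn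
      rw [min_eq_right hcase]
      linarith
    · have hμr : μ ≤ r - 1 := by omega
      obtain ⟨heq, hdim⟩ := hA hμr
      rw [hdim] at hrn
      rw [Matrix.rank]
      have harith : ν * (r - μ) + ν * μ = ν * r := by
        rw [← Nat.mul_add, Nat.sub_add_cancel (le_of_lt (by omega : μ < r))]
      have hmin : min μ r = μ := Nat.min_eq_left (by omega)
      rw [hmin]
      linarith
  · constructor
    · intro hinj
      by_contra hc
      have hμr : μ ≤ r - 1 := by omega
      obtain ⟨heq, hdim⟩ := hA hμr
      have hb : LinearMap.ker (Ncal q r μ ν z).mulVecLin = ⊥ :=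
        LinearMap.ker_eq_bot.mpr hinj
      rw [hb, finrank_bot ℝ (Fin ν × Fin r → ℝ)] at hdim
      exact (Nat.mul_ne_zero (by omega) (by omega)) hdim.symm
    · intro hc
      exact LinearMap.ker_eq_bot.mp (hbot hc)
end
end
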